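/- arXiv:1409.6002 — 6 statements merged into one kernel-verified Lean document; each statement's English description precedes it below -/
import Mathlib

section
/- Let r ≥ 2 and let G be a 2r-regular graph of order n. If there exist r completely independent spanning trees T_1, …, T_r in G, then for every integer i with 1 ≤ i ≤ r one has ⌈(n−2)/r⌉ ≤ |inn(T_i)| ≤ n − ⌈(n−2)/r⌉·(r−1). -/
open SimpleGraph

/-- The degree of the vertex `v` in the graph `T`, as the cardinality of its
neighbor set. -/
noncomputable def degN {V : Type*} (T : SimpleGraph V) (v : V) : ℕ :=
  (T.neighborSet v).ncard

/-- `T` is a spanning tree of `G`: a subgraph of `G` (on the same vertex set)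
which is a tree. -/
def IsSpanningTreeOf {V : Type*} (G T : SimpleGraph V) : Prop :=
  T ≤ G ∧ T.IsTree

/-- The set of inner (non-leaf) vertices of `T`. -/
def inn {V : Type*} (T : SimpleGraph V) : Set V :=
  {v | 2 ≤ degN T v}

/-- `T 0, …, T (r-1)` are completely independent spanning trees of `G`:
pairwise edge-disjoint spanning trees of `G` such that every vertex has degree
greater than `1` in at most one of them. -/
def AreCISTs {V : Type*} {r : ℕ} (G : SimpleGraph V) (T : Fin r → SimpleGraph V) : Prop :=
  (∀ i, IsSpanningTreeOf G (T i)) ∧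
  (∀ i j, i ≠ j → Disjoint ((T i).edgeSet) ((T j).edgeSet)) ∧
  (∀ v : V, ∀ i j, 1 < degN (T i) v → 1 < degN (T j) v → i = j)

/-- `G` is `d`-regular: every vertex has degree `d`. -/
def IsRegularDeg {V : Type*} (G : SimpleGraph V) (d : ℕ) : Prop :=
  ∀ v, degN G v = d

/-- The set of lost edges: edges of `G` belonging to none of the trees `T i`. -/
def lostEdges {V : Type*} {r : ℕ} (G : SimpleGraph V) (T : Fin r → SimpleGraph V) :
    Set (Sym2 V) :=
  G.edgeSet \ ⋃ i, (T i).edgeSet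

/-- `E^l_T`: the set of edges of `G` having both endpoints inner vertices of `T`
and which are not edges of `T`. -/
def lostAt {V : Type*} (G T : SimpleGraph V) : Set (Sym2 V) :=
  {e | e ∈ G.edgeSet ∧ (∀ v ∈ e, v ∈ inn T) ∧ e ∉ T.edgeSet}

/-- The potential extra degree of a spanning tree `T` of a `2r`-regular graph of
order `n`: `ped(T) = |inn(T)|·r − n + 2` (as an integer). -/
noncomputable def ped {V : Type*} (n r : ℕ) (T : SimpleGraph V) : ℤ :=
  ((inn T).ncard : ℤ) * r - n + 2

private lemma ceil_div_le_aux {a r c : ℕ} (hr : 0 < r) (h : a ≤ c * r) : (a + r - 1) / r ≤ c := by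
  have h1 : a + r - 1 ≤ r - 1 + c * r := by omega
  calc (a + r - 1) / r ≤ (r - 1 + c * r) / r := Nat.div_le_div_right h1
    _ = (r - 1) / r + c := Nat.add_mul_div_right _ _ hr
    _ = c := by rw [Nat.div_eq_of_lt (by omega)]; omega

/-- If `G` is a `2r`-regular graph of order `n` (`r ≥ 2`) admitting `r` completely
independent spanning trees `T_1, …, T_r`, then for every `i`,
`⌈(n−2)/r⌉ ≤ |inn(T_i)| ≤ n − ⌈(n−2)/r⌉·(r−1)`.
(For naturals, `⌈a/b⌉ = (a + b - 1) / b`.) -/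
theorem stmt_2 {V : Type*} [Fintype V] (r : ℕ) (hr : 2 ≤ r)
    (G : SimpleGraph V) (hreg : IsRegularDeg G (2 * r))
    (T : Fin r → SimpleGraph V) (hT : AreCISTs G T) :
    ∀ i : Fin r,
      (Fintype.card V - 2 + r - 1) / r ≤ (inn (T i)).ncard ∧
      (inn (T i)).ncard ≤ Fintype.card V - ((Fintype.card V - 2 + r - 1) / r) * (r - 1) := by
  classical
  obtain ⟨hSpan, hDisjE, hInner⟩ := hT
  have hrpos : 0 < r := by omega
  set n := Fintype.card V with hn
  have hVne : Nonempty V := (hSpan ⟨0, hrpos⟩).2.isConnected.nonempty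
  have hdegN : ∀ (H : SimpleGraph V) (v : V), degN H v = H.degree v := by
    intro H v
    simp [degN, SimpleGraph.degree, SimpleGraph.neighborFinset_def, Set.ncard_eq_toFinset_card']
  -- `n ≥ 2`
  have hn2 : 2 ≤ n := by
    obtain ⟨v⟩ := hVne
    have h1 : 0 < degN G v := by rw [hreg v]; omega
    rw [degN] at h1
    obtain ⟨w, hw⟩ := (Set.ncard_pos (Set.toFinite _)).mp h1
    have hvw : v ≠ w := fun h => G.irrefl (h ▸ hw)
    have : Nontrivial V := ⟨⟨v, w, hvw⟩⟩
    exact Fintype.one_lt_card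
  have hnontriv : Nontrivial V := Fintype.one_lt_card_iff_nontrivial.mp hn2
  -- every vertex has positive degree in every tree
  have hpos : ∀ (j : Fin r) (v : V), 1 ≤ degN (T j) v := by
    intro j v
    have hconn := (hSpan j).2.isConnected
    obtain ⟨w, hw⟩ := exists_ne v
    obtain ⟨p⟩ := hconn.preconnected v w
    have : ∃ u, (T j).Adj v u := by
      cases p with
      | nil => exact absurd rfl hw.symm
      | cons h q => exact ⟨_, h⟩
    obtain ⟨u, hu⟩ := this
    rw [degN]
    exact (Set.ncard_pos (Set.toFinite _)).mpr ⟨u, hu⟩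
  -- at each vertex, the tree degrees sum to at most `2r`
  have hsum : ∀ v : V, ∑ j : Fin r, degN (T j) v ≤ 2 * r := by
    intro v
    have hFdisj : ∀ j k : Fin r, j ≠ k →
        Disjoint ((T j).neighborFinset v) ((T k).neighborFinset v) := by
      intro j k hjk
      rw [Finset.disjoint_left]
      intro w hwj hwk
      rw [SimpleGraph.mem_neighborFinset] at hwj hwk
      exact Set.disjoint_left.mp (hDisjE j k hjk)
        ((T j).mem_edgeSet.mpr hwj) ((T k).mem_edgeSet.mpr hwk)
    calc ∑ j : Fin r, degN (T j) v = ∑ j : Fin r, ((T j).neighborFinset v).card := by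
          refine Finset.sum_congr rfl fun j _ => ?_
          rw [hdegN]; rfl
      _ = (Finset.univ.biUnion fun j => (T j).neighborFinset v).card :=
          (Finset.card_biUnion (fun j _ k _ h => hFdisj j k h)).symm
      _ ≤ (G.neighborFinset v).card := Finset.card_le_card (by
          intro w hw
          simp only [Finset.mem_biUnion, SimpleGraph.mem_neighborFinset] at hw ⊢
          obtain ⟨j, _, hj⟩ := hw
          exact (hSpan j).1 hj)
      _ = degN G v := ((hdegN G v).symm : _)
      _ = 2 * r := hreg v
  -- degree in any single tree is at most `r + 1`
  have hdegle : ∀ (i : Fin r) (v : V), degN (T i) v ≤ r + 1 := by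
    intro i v
    have h1 := hsum v
    have h2 : ∑ j ∈ Finset.univ.erase i, degN (T j) v + degN (T i) v = ∑ j, degN (T j) v :=
      Finset.sum_erase_add _ _ (Finset.mem_univ i)
    have h3 : r - 1 ≤ ∑ j ∈ Finset.univ.erase i, degN (T j) v := by
      have hcard : (Finset.univ.erase i).card = r - 1 := by
        rw [Finset.card_erase_of_mem (Finset.mem_univ i), Finset.card_univ, Fintype.card_fin]
      calc r - 1 = ∑ _j ∈ Finset.univ.erase i, 1 := by rw [Finset.sum_const, smul_eq_mul, mul_one, hcard]
        _ ≤ ∑ j ∈ Finset.univ.erase i, degN (T j) v :=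
            Finset.sum_le_sum fun j _ => hpos j v
    omega
  -- inner vertices as a finset
  have hInnEq : ∀ i : Fin r,
      (inn (T i)).ncard = (Finset.univ.filter fun v => 2 ≤ degN (T i) v).card := by
    intro i
    rw [show inn (T i) = ↑(Finset.univ.filter fun v => 2 ≤ degN (T i) v) by
      ext v; simp [inn]]
    exact Set.ncard_coe_finset _
  -- degree sum in a spanning tree
  have hsumdeg : ∀ i : Fin r, ∑ v, degN (T i) v = 2 * (n - 1) := by
    intro i
    have h1 : (T i).edgeFinset.card + 1 = n := (hSpan i).2.card_edgeFinset
    have h2 : ∑ v, (T i).degree v = 2 * (T i).edgeFinset.card :=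
      (T i).sum_degrees_eq_twice_card_edges
    calc ∑ v, degN (T i) v = ∑ v, (T i).degree v :=
          Finset.sum_congr rfl fun v _ => hdegN _ v
      _ = 2 * (T i).edgeFinset.card := h2
      _ = 2 * (n - 1) := by omega
  -- core lower bound: `n - 2 ≤ |inn (T i)| * r`
  have hlow : ∀ i : Fin r,
      n - 2 ≤ (Finset.univ.filter fun v => 2 ≤ degN (T i) v).card * r := by
    intro i
    set I := Finset.univ.filter (fun v => 2 ≤ degN (T i) v) with hI
    have hsplit : ∑ v ∈ I, degN (T i) v + ∑ v ∈ Iᶜ, degN (T i) v = 2 * (n - 1) := by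
      rw [Finset.sum_add_sum_compl]; exact hsumdeg i
    have hc1 : ∑ v ∈ Iᶜ, degN (T i) v = Iᶜ.card := by
      rw [Finset.card_eq_sum_ones]
      refine Finset.sum_congr rfl fun v hv => ?_
      have hv' : ¬ 2 ≤ degN (T i) v := by
        have := Finset.mem_compl.mp hv
        simpa [hI] using this
      have := hpos i v; omega
    have hc2 : ∑ v ∈ I, degN (T i) v ≤ I.card * (r + 1) := by
      have := Finset.sum_le_card_nsmul I (fun v => degN (T i) v) (r + 1)
        (fun v _ => hdegle i v)
      simpa [smul_eq_mul] using this
    have hIc : Iᶜ.card = n - I.card := by rw [Finset.card_compl, hn]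
    have hIle : I.card ≤ n := by
      rw [hn]; exact (Finset.card_le_univ I).trans_eq Finset.card_univ
    have key : ∑ v ∈ I, degN (T i) v = n - 2 + I.card := by omega
    have h' : n - 2 + I.card ≤ I.card * r + I.card := by
      calc n - 2 + I.card ≤ I.card * (r + 1) := key ▸ hc2
        _ = I.card * r + I.card := by ring
    exact Nat.le_of_add_le_add_right h'
  -- the inner-vertex finsets are pairwise disjoint
  have hIdisj : ∀ j k : Fin r, j ≠ k →
      Disjoint (Finset.univ.filter fun v => 2 ≤ degN (T j) v)
        (Finset.univ.filter fun v => 2 ≤ degN (T k) v) := by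
    intro j k hjk
    rw [Finset.disjoint_left]
    intro v hvj hvk
    simp only [Finset.mem_filter] at hvj hvk
    exact hjk (hInner v j k (by omega) (by omega))
  have htot : ∑ j : Fin r, (Finset.univ.filter fun v => 2 ≤ degN (T j) v).card ≤ n := by
    rw [← Finset.card_biUnion (fun j _ k _ h => hIdisj j k h)]
    calc (Finset.univ.biUnion fun j => Finset.univ.filter fun v => 2 ≤ degN (T j) v).card
        ≤ (Finset.univ : Finset V).card := Finset.card_le_univ _
      _ = n := Finset.card_univ
  intro i
  have hLB : ∀ j : Fin r,
      (n - 2 + r - 1) / r ≤ (Finset.univ.filter fun v => 2 ≤ degN (T j) v).card :=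
    fun j => ceil_div_le_aux hrpos (hlow j)
  refine ⟨by rw [hInnEq i]; exact hLB i, ?_⟩
  rw [hInnEq i]
  set m := (n - 2 + r - 1) / r with hm
  have hcard_erase : (Finset.univ.erase i).card = r - 1 := by
    rw [Finset.card_erase_of_mem (Finset.mem_univ i), Finset.card_univ, Fintype.card_fin]
  have e2 : (r - 1) * m ≤ ∑ j ∈ Finset.univ.erase i,
      (Finset.univ.filter fun v => 2 ≤ degN (T j) v).card := by
    have := Finset.card_nsmul_le_sum (Finset.univ.erase i)
      (fun j => (Finset.univ.filter fun v => 2 ≤ degN (T j) v).card) m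
      (fun j _ => hLB j)
    rwa [smul_eq_mul, hcard_erase] at this
  have e1 : ∑ j ∈ Finset.univ.erase i, (Finset.univ.filter fun v => 2 ≤ degN (T j) v).card
      + (Finset.univ.filter fun v => 2 ≤ degN (T i) v).card
      = ∑ j : Fin r, (Finset.univ.filter fun v => 2 ≤ degN (T j) v).card :=
    Finset.sum_erase_add _ _ (Finset.mem_univ i)
  have h2 : (Finset.univ.filter fun v => 2 ≤ degN (T i) v).card + (r - 1) * m ≤ n := by
    calc (Finset.univ.filter fun v => 2 ≤ degN (T i) v).card + (r - 1) * m
        ≤ (Finset.univ.filter fun v => 2 ≤ degN (T i) v).card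
          + ∑ j ∈ Finset.univ.erase i, (Finset.univ.filter fun v => 2 ≤ degN (T j) v).card :=
          Nat.add_le_add_left e2 _
      _ = ∑ j : Fin r, (Finset.univ.filter fun v => 2 ≤ degN (T j) v).card := by
          rw [add_comm]; exact e1
      _ ≤ n := htot
  exact Nat.le_sub_of_add_le (by rwa [mul_comm m (r - 1)])
end

section
/- Let r ≥ 2 and let G be a 2r-regular graph of order n in which there exist r completely independent spanning trees T_1, …, T_r. Then the sum over i = 1, …, r of |E^l_{T_i}| is at most |E^l| = r, where E^l_{T_i} is the set of edges uv of G with both endpoints inner vertices of T_i and uv not an edge of T_i, and E^l is the set of edges of G lying in none of the T_i. -/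
open SimpleGraph

/-- In a graph where `u` and `v` are adjacent only to each other, any walk
starting in `{u, v}` ends in `{u, v}`. -/
lemma walk_end_aux {V : Type*} {T : SimpleGraph V} {u v : V}
    (hu : T.neighborSet u = {v}) (hv : T.neighborSet v = {u})
    {a b : V} (p : T.Walk a b) : a ∈ ({u, v} : Set V) → b ∈ ({u, v} : Set V) := by
  induction p with
  | nil => exact id
  | @cons x y z h q ih =>
    intro hx
    apply ih
    rcases hx with hx | hx
    · have hy : y ∈ T.neighborSet x := h
      rw [hx, hu] at hy
      exact Or.inr hy
    · rw [Set.mem_singleton_iff] at hx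
      have hy : y ∈ T.neighborSet x := h
      rw [hx, hv] at hy
      exact Or.inl hy

/-- An edge of a tree on at least 3 vertices has an inner endpoint. -/
lemma tree_edge_inner {V : Type*} [Fintype V] {T : SimpleGraph V} (hT : T.IsTree)
    (h3 : 3 ≤ Fintype.card V) {u v : V} (huv : T.Adj u v) :
    2 ≤ degN T u ∨ 2 ≤ degN T v := by
  by_contra hc
  push_neg at hc
  obtain ⟨h1, h2⟩ := hc
  have hns : ∀ (a b : V), T.Adj a b → degN T a < 2 → T.neighborSet a = {b} := by
    intro a b hab hlt
    have hpos : 0 < (T.neighborSet a).ncard :=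
      (Set.ncard_pos (Set.toFinite _)).mpr ⟨b, hab⟩
    have hone : (T.neighborSet a).ncard = 1 := by
      have : degN T a = (T.neighborSet a).ncard := rfl
      omega
    obtain ⟨c, hc⟩ := Set.ncard_eq_one.mp hone
    have : b ∈ ({c} : Set V) := hc ▸ (hab : b ∈ T.neighborSet a)
    rw [Set.mem_singleton_iff] at this
    rw [hc, this]
  have hu : T.neighborSet u = {v} := hns u v huv h1
  have hv : T.neighborSet v = {u} := hns v u huv.symm h2
  -- find a third vertex
  have hsub : ¬ (Set.univ : Set V) ⊆ {u, v} := by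
    intro hs
    have : (Set.univ : Set V).ncard ≤ ({u, v} : Set V).ncard :=
      Set.ncard_le_ncard hs (Set.toFinite _)
    have h2' : ({u, v} : Set V).ncard ≤ 2 :=
      le_trans (Set.ncard_insert_le _ _) (by simp)
    rw [Set.ncard_univ, Nat.card_eq_fintype_card] at this
    omega
  obtain ⟨w, -, hw⟩ := Set.not_subset.mp hsub
  obtain ⟨p⟩ := hT.isConnected.preconnected u w
  exact hw (walk_end_aux hu hv p (Or.inl rfl))

/-- If `G` is a `2r`-regular graph (`r ≥ 2`) admitting `r` completely independent
spanning trees `T_1, …, T_r`, then `∑ i, |E^l_{T_i}| ≤ |E^l| = r`. -/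
theorem stmt_4 {V : Type*} [Fintype V] (r : ℕ) (hr : 2 ≤ r)
    (G : SimpleGraph V) (hreg : IsRegularDeg G (2 * r))
    (T : Fin r → SimpleGraph V) (hT : AreCISTs G T) :
    (∑ i : Fin r, (lostAt G (T i)).ncard) ≤ (lostEdges G T).ncard ∧
    (lostEdges G T).ncard = r := by
  classical
  obtain ⟨hsp, hdisj, hdeg⟩ := hT
  set n := Fintype.card V with hn
  have i0 : Fin r := ⟨0, by omega⟩
  have hne : Nonempty V := (hsp i0).2.isConnected.nonempty
  obtain ⟨v0⟩ := hne
  have hcard : 2 * r ≤ n := by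
    have h1 : degN G v0 = 2 * r := hreg v0
    have h2 : (G.neighborSet v0).ncard ≤ (Set.univ : Set V).ncard :=
      Set.ncard_le_ncard (Set.subset_univ _) Set.finite_univ
    rw [Set.ncard_univ, Nat.card_eq_fintype_card] at h2
    have h0 : degN G v0 = (G.neighborSet v0).ncard := rfl
    omega
  have h3 : 3 ≤ n := by omega
  -- a vertex is inner in at most one tree
  have hinn : ∀ v i j, v ∈ inn (T i) → v ∈ inn (T j) → i = j := by
    intro v i j hi hj
    exact hdeg v i j hi hj
  -- each lostAt set consists of lost edges
  have hsubl : ∀ i, lostAt G (T i) ⊆ lostEdges G T := by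
    intro i e
    induction e using Sym2.ind with
    | _ u v =>
      rintro ⟨heG, hinne, hnotT⟩
      refine ⟨heG, ?_⟩
      simp only [Set.mem_iUnion]
      rintro ⟨j, hej⟩
      by_cases hij : j = i
      · exact hnotT (hij ▸ hej)
      · have hadj : (T j).Adj u v := by rwa [SimpleGraph.mem_edgeSet] at hej
        have hu : u ∈ inn (T i) := hinne u (by simp)
        have hv : v ∈ inn (T i) := hinne v (by simp)
        rcases tree_edge_inner (hsp j).2 h3 hadj with h | h
        · exact hij (hinn u j i h hu)
        · exact hij (hinn v j i h hv)
  -- the lostAt sets are pairwise disjoint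
  have hdisjl : ∀ i j : Fin r, i ≠ j → Disjoint (lostAt G (T i)) (lostAt G (T j)) := by
    intro i j hij
    rw [Set.disjoint_left]
    intro e
    induction e using Sym2.ind with
    | _ u v =>
      rintro ⟨-, hiu, -⟩ ⟨-, hju, -⟩
      exact hij (hinn u i j (hiu u (by simp)) (hju u (by simp)))
  -- Finset versions
  set A : Fin r → Finset (Sym2 V) := fun i => (lostAt G (T i)).toFinset with hA
  have hdisjA : ∀ i ∈ Finset.univ, ∀ j ∈ Finset.univ, i ≠ j → Disjoint (A i) (A j) := by
    intro i _ j _ hij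
    simpa [hA, Set.disjoint_toFinset] using hdisjl i j hij
  have hsubF : Finset.univ.biUnion A ⊆ (lostEdges G T).toFinset := by
    intro e he
    rw [Finset.mem_biUnion] at he
    obtain ⟨i, -, hi⟩ := he
    rw [hA, Set.mem_toFinset] at hi
    rw [Set.mem_toFinset]
    exact hsubl i hi
  have hineq : (∑ i : Fin r, (lostAt G (T i)).ncard) ≤ (lostEdges G T).ncard := by
    rw [Set.ncard_eq_toFinset_card' (lostEdges G T)]
    calc ∑ i : Fin r, (lostAt G (T i)).ncard = ∑ i : Fin r, (A i).card := by
          refine Finset.sum_congr rfl fun i _ => ?_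
          exact Set.ncard_eq_toFinset_card' _
      _ = (Finset.univ.biUnion A).card := (Finset.card_biUnion hdisjA).symm
      _ ≤ (lostEdges G T).toFinset.card := Finset.card_le_card hsubF
  -- counting the lost edges
  have hdegE : ∀ v, G.degree v = 2 * r := by
    intro v
    rw [← hreg v, degN, Set.ncard_eq_toFinset_card']
    rfl
  have hEG : G.edgeSet.ncard = n * r := by
    have hsum := G.sum_degrees_eq_twice_card_edges
    rw [Finset.sum_congr rfl fun v _ => hdegE v, Finset.sum_const, Finset.card_univ,
      smul_eq_mul] at hsum
    have h1 : G.edgeSet.ncard = G.edgeFinset.card := Set.ncard_eq_toFinset_card' _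
    rw [h1]
    have h2 : 2 * (n * r) = 2 * G.edgeFinset.card := by rw [← hsum, hn]; ring
    exact (Nat.eq_of_mul_eq_mul_left (by norm_num) h2).symm
  have hTcard : ∀ i, ((T i).edgeSet).ncard + 1 = n := by
    intro i
    rw [Set.ncard_eq_toFinset_card']
    exact (hsp i).2.card_edgeFinset
  have hdisjB : ∀ i ∈ Finset.univ, ∀ j ∈ (Finset.univ : Finset (Fin r)), i ≠ j →
      Disjoint ((T i).edgeSet.toFinset) ((T j).edgeSet.toFinset) := by
    intro i _ j _ hij
    simpa [Set.disjoint_toFinset] using hdisj i j hij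
  have hUfin : Finset.univ.biUnion (fun i => ((T i).edgeSet).toFinset)
      = (⋃ i, (T i).edgeSet).toFinset := by
    ext e; simp
  have hUcard : (⋃ i, (T i).edgeSet).ncard = ∑ i : Fin r, ((T i).edgeSet).ncard := by
    rw [Set.ncard_eq_toFinset_card', ← hUfin, Finset.card_biUnion hdisjB]
    refine Finset.sum_congr rfl fun i _ => ?_
    exact (Set.ncard_eq_toFinset_card' _).symm
  have hUsub : (⋃ i, (T i).edgeSet) ⊆ G.edgeSet :=
    Set.iUnion_subset fun i => SimpleGraph.edgeSet_mono (hsp i).1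
  have hlost : (lostEdges G T).ncard = G.edgeSet.ncard - (⋃ i, (T i).edgeSet).ncard :=
    Set.ncard_diff hUsub (Set.toFinite _)
  have hUval : (⋃ i, (T i).edgeSet).ncard = r * (n - 1) := by
    rw [hUcard]
    rw [Finset.sum_congr rfl fun i _ => show ((T i).edgeSet).ncard = n - 1 by
      have := hTcard i; omega]
    simp [Finset.card_univ, mul_comm]
  have hfinal : (lostEdges G T).ncard = r := by
    rw [hlost, hEG, hUval]
    obtain ⟨m, hm⟩ : ∃ m, n = m + 1 := ⟨n - 1, by omega⟩
    rw [hm, Nat.add_sub_cancel, add_mul, one_mul, mul_comm r m]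
    exact Nat.add_sub_cancel_left (m * r) r
  exact ⟨hineq, hfinal⟩
end

section
/- Let r ≥ 2 and let G be a 2r-regular graph of order n in which there exist r completely independent spanning trees T_1, …, T_r. Then there exists a spanning tree T among them such that ped(T) ≤ 2 and |E^l_T| ≤ 1; moreover, if r does not divide n, then ped(T) < 2 and |E^l_T| < 1 (i.e., ped(T) ≤ 1 and E^l_T = ∅). -/
open SimpleGraph

open Finset

/-! ### Auxiliary definitions and lemmas -/

private lemma degN_eq_degree {V : Type*} [Fintype V] (H : SimpleGraph V) [DecidableRel H.Adj]
    (v : V) : degN H v = H.degree v := by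
  rw [degN, Set.ncard_eq_toFinset_card', Set.toFinset_card, card_neighborSet_eq_degree]

private lemma one_le_degN' {V : Type*} [Fintype V] {H : SimpleGraph V} (hc : H.Connected)
    (hcard : 2 ≤ Fintype.card V) (v : V) : 1 ≤ degN H v := by
  obtain ⟨w, hw⟩ := Fintype.exists_ne_of_one_lt_card (by omega) v
  obtain ⟨p⟩ := hc.preconnected v w
  cases p with
  | nil => exact absurd rfl hw
  | cons h _ =>
    have hne : (H.neighborSet v).Nonempty := ⟨_, h⟩
    have h2 := Set.ncard_pos (s := H.neighborSet v) (Set.toFinite _) |>.mpr hne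
    rw [degN]
    omega

private lemma no_leaf_edge' {V : Type*} [Fintype V] {H : SimpleGraph V} (hc : H.Connected)
    (hcard : 3 ≤ Fintype.card V) {u w : V} (hadj : H.Adj u w)
    (hu : degN H u ≤ 1) (hw : degN H w ≤ 1) : False := by
  classical
  have hune : u ≠ w := hadj.ne
  have hNu : H.neighborSet u = {w} := by
    have h0 : 1 ≤ (H.neighborSet u).ncard :=
      Set.ncard_pos (Set.toFinite _) |>.mpr ⟨w, hadj⟩
    rw [degN] at hu
    have h1 : (H.neighborSet u).ncard = 1 := le_antisymm hu h0
    obtain ⟨a, ha⟩ := Set.ncard_eq_one.mp h1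
    have hmem : w ∈ H.neighborSet u := hadj
    rw [ha] at hmem ⊢
    rw [Set.mem_singleton_iff.mp hmem]
  have hNw : H.neighborSet w = {u} := by
    have h0 : 1 ≤ (H.neighborSet w).ncard :=
      Set.ncard_pos (Set.toFinite _) |>.mpr ⟨u, hadj.symm⟩
    rw [degN] at hw
    have h1 : (H.neighborSet w).ncard = 1 := le_antisymm hw h0
    obtain ⟨a, ha⟩ := Set.ncard_eq_one.mp h1
    have hmem : u ∈ H.neighborSet w := hadj.symm
    rw [ha] at hmem ⊢
    rw [Set.mem_singleton_iff.mp hmem]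
  obtain ⟨x, hxu, hxw⟩ : ∃ x : V, x ≠ u ∧ x ≠ w := by
    by_contra hcon
    push_neg at hcon
    have hsub : (Finset.univ : Finset V) ⊆ {u, w} := by
      intro x _
      simp only [Finset.mem_insert, Finset.mem_singleton]
      by_cases h : x = u
      · exact Or.inl h
      · exact Or.inr (hcon x h)
    have hle := Finset.card_le_card hsub
    rw [Finset.card_univ] at hle
    have : ({u, w} : Finset V).card ≤ 2 := Finset.card_insert_le _ _ |>.trans (by simp)
    omega
  have key : ∀ y z : V, H.Walk y z → (y = u ∨ y = w) → (z = u ∨ z = w) := by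
    intro y z p
    induction p with
    | nil => exact id
    | @cons y m z h p ih =>
      intro hy
      apply ih
      rcases hy with rfl | rfl
      · have : m ∈ H.neighborSet y := h
        rw [hNu] at this
        exact Or.inr (Set.mem_singleton_iff.mp this)
      · have : m ∈ H.neighborSet y := h
        rw [hNw] at this
        exact Or.inl (Set.mem_singleton_iff.mp this)
  obtain ⟨p⟩ := hc.preconnected u x
  rcases key u x p (Or.inl rfl) with h | h
  · exact hxu h
  · exact hxw h

/-- The finset of inner vertices. -/
noncomputable def innFin {V : Type*} [Fintype V] (T' : SimpleGraph V) : Finset V :=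
  (inn T').toFinite.toFinset

private lemma mem_innFin {V : Type*} [Fintype V] {T' : SimpleGraph V} {v : V} :
    v ∈ innFin T' ↔ 2 ≤ degN T' v := by
  simp [innFin, Set.Finite.mem_toFinset, inn]

private lemma ncard_inn_eq {V : Type*} [Fintype V] (T' : SimpleGraph V) :
    (inn T').ncard = (innFin T').card :=
  Set.ncard_eq_toFinset_card _ _

/-- Total tree degree of a vertex. -/
noncomputable def Dsum {V : Type*} {r : ℕ} (T : Fin r → SimpleGraph V) (v : V) : ℕ :=
  ∑ j, degN (T j) v

/-- Lost incidences at inner vertices of the `i`-th tree. -/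
noncomputable def Lsum {V : Type*} [Fintype V] {r : ℕ} (T : Fin r → SimpleGraph V)
    (i : Fin r) : ℕ :=
  ∑ v ∈ innFin (T i), (2 * r - Dsum T v)

theorem test_stub : True := trivial

/-- If `G` is a `2r`-regular graph of order `n` (`r ≥ 2`) admitting `r` completely
independent spanning trees, then one of them, `T`, satisfies `ped(T) ≤ 2` and
`|E^l_T| ≤ 1`, with strict inequalities (i.e. `ped(T) < 2` and `E^l_T = ∅`) if
`r` does not divide `n`. -/
theorem stmt_5 {V : Type*} [Fintype V] (r : ℕ) (hr : 2 ≤ r)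
    (G : SimpleGraph V) (hreg : IsRegularDeg G (2 * r))
    (T : Fin r → SimpleGraph V) (hT : AreCISTs G T) :
    ∃ i : Fin r,
      ped (Fintype.card V) r (T i) ≤ 2 ∧ (lostAt G (T i)).ncard ≤ 1 ∧
      (¬ (r ∣ Fintype.card V) →
        ped (Fintype.card V) r (T i) < 2 ∧ lostAt G (T i) = ∅) := by
  classical
  by_cases hV : Nonempty V
  swap
  · -- the empty case
    haveI : IsEmpty V := not_nonempty_iff.mp hV
    have hn0 : Fintype.card V = 0 := Fintype.card_eq_zero
    refine ⟨⟨0, by omega⟩, ?_, ?_, ?_⟩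
    · rw [ped, Set.eq_empty_of_isEmpty (inn (T _))]
      simp [hn0]
    · have : lostAt G (T ⟨0, by omega⟩) = ∅ := by
        ext e
        simp only [Set.mem_empty_iff_false, iff_false]
        intro he
        induction e using Sym2.ind with
        | _ u w => exact IsEmpty.false u
      simp [this]
    · intro hdvd
      exact absurd (hn0 ▸ dvd_zero r) hdvd
  · -- the main case
    have htree : ∀ i, (T i).IsTree := fun i => (hT.1 i).2
    have hle : ∀ i, T i ≤ G := fun i => (hT.1 i).1
    have hconn : ∀ i, (T i).Connected := fun i => (htree i).isConnected
    -- n ≥ 2r+1 ≥ 5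
    have hn5 : 2 * r + 1 ≤ Fintype.card V := by
      obtain ⟨v0⟩ := hV
      have h1 := degN_eq_degree G v0
      have h2 := G.degree_lt_card_verts v0
      have h3 := hreg v0
      omega
    have hdeg1 : ∀ (i : Fin r) v, 1 ≤ degN (T i) v := fun i v =>
      one_le_degN' (hconn i) (by omega) v
    -- disjointness of neighbor finsets
    have hdisjN : ∀ (v : V) (j j' : Fin r), j ≠ j' →
        Disjoint ((T j).neighborFinset v) ((T j').neighborFinset v) := by
      intro v j j' hne
      rw [Finset.disjoint_left]
      intro w hw hw'
      rw [mem_neighborFinset] at hw hw'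
      exact Set.disjoint_left.mp (hT.2.1 j j' hne) ((T j).mem_edgeSet.mpr hw)
        ((T j').mem_edgeSet.mpr hw')
    have hsubN : ∀ v : V,
        (Finset.univ.biUnion fun j => (T j).neighborFinset v) ⊆ G.neighborFinset v := by
      intro v w hw
      rw [Finset.mem_biUnion] at hw
      obtain ⟨j, -, hj⟩ := hw
      rw [mem_neighborFinset] at hj ⊢
      exact hle j hj
    have hDcard : ∀ v : V,
        (Finset.univ.biUnion fun j => (T j).neighborFinset v).card = Dsum T v := by
      intro v
      rw [Finset.card_biUnion (fun j _ j' _ h => hdisjN v j j' h), Dsum]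
      exact Finset.sum_congr rfl fun j _ => by
        rw [card_neighborFinset_eq_degree, ← degN_eq_degree]
    have hDle : ∀ v : V, Dsum T v ≤ 2 * r := by
      intro v
      have h1 := Finset.card_le_card (hsubN v)
      rw [hDcard v, card_neighborFinset_eq_degree, ← degN_eq_degree, hreg v] at h1
      exact h1
    -- sum of degrees of a tree
    have hsumdeg : ∀ i : Fin r, ∑ v, degN (T i) v = 2 * (Fintype.card V - 1) := by
      intro i
      have h1 := SimpleGraph.sum_degrees_eq_twice_card_edges (T i)
      have h2 := (htree i).card_edgeFinset
      have h3 : ∑ v, degN (T i) v = ∑ v, (T i).degree v :=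
        Finset.sum_congr rfl fun v _ => degN_eq_degree _ v
      omega
    -- total sum of Dsum
    have hsumD : ∑ v, Dsum T v = r * (2 * (Fintype.card V - 1)) := by
      simp only [Dsum]
      rw [Finset.sum_comm]
      rw [Finset.sum_congr rfl fun j (_ : j ∈ Finset.univ) => hsumdeg j]
      rw [Finset.sum_const, Finset.card_univ, Fintype.card_fin, smul_eq_mul]
    -- total lost incidences = 2r
    have hsuml : ∑ v, (2 * r - Dsum T v) = 2 * r := by
      have h1 : ∑ v, ((2 * r - Dsum T v) + Dsum T v) = ∑ v : V, 2 * r :=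
        Finset.sum_congr rfl fun v _ => Nat.sub_add_cancel (hDle v)
      rw [Finset.sum_add_distrib, hsumD, Finset.sum_const, Finset.card_univ, smul_eq_mul] at h1
      have h2 : ((∑ v, (2 * r - Dsum T v) : ℕ) : ℤ) + r * (2 * ((Fintype.card V : ℤ) - 1))
          = (Fintype.card V : ℤ) * (2 * r) := by
        have := congrArg (fun x : ℕ => (x : ℤ)) h1
        push_cast [Nat.cast_sub (show 1 ≤ Fintype.card V by omega)] at this
        push_cast
        linarith
      have h3 : ((∑ v, (2 * r - Dsum T v) : ℕ) : ℤ) = 2 * r := by linear_combination h2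
      exact_mod_cast h3
    -- inner finsets are pairwise disjoint
    have hinnD : ∀ i j : Fin r, i ≠ j → Disjoint (innFin (T i)) (innFin (T j)) := by
      intro i j hij
      rw [Finset.disjoint_left]
      intro v hvi hvj
      rw [mem_innFin] at hvi hvj
      exact hij (hT.2.2 v i j (by omega) (by omega))
    -- sum of the L i is at most 2r
    have hLsum : ∑ i, Lsum T i ≤ 2 * r := by
      have h1 : ∑ v ∈ Finset.univ.biUnion (fun i => innFin (T i)), (2 * r - Dsum T v)
          = ∑ i, Lsum T i := by
        rw [Finset.sum_biUnion]
        · rfl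
        · intro i _ j _ hij
          exact hinnD i j hij
      rw [← h1]
      calc ∑ v ∈ Finset.univ.biUnion (fun i => innFin (T i)), (2 * r - Dsum T v)
          ≤ ∑ v, (2 * r - Dsum T v) :=
            Finset.sum_le_sum_of_subset (Finset.subset_univ _)
        _ = 2 * r := hsuml
    -- degrees in other trees at inner vertices
    have hDeq : ∀ i : Fin r, ∀ v ∈ innFin (T i), Dsum T v = degN (T i) v + (r - 1) := by
      intro i v hv
      rw [mem_innFin] at hv
      have hother : ∀ j, j ≠ i → degN (T j) v = 1 := by
        intro j hj
        have h1 : ¬ (1 < degN (T j) v) := fun h => hj (hT.2.2 v j i h (by omega))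
        have h2 := hdeg1 j v
        omega
      rw [Dsum, ← Finset.add_sum_erase _ _ (Finset.mem_univ i)]
      congr 1
      rw [Finset.sum_congr rfl fun j hj => hother j (Finset.ne_of_mem_erase hj),
        Finset.sum_const, smul_eq_mul, mul_one, Finset.card_erase_of_mem (Finset.mem_univ i),
        Finset.card_univ, Fintype.card_fin]
    -- key per-vertex identity
    have hdeglA : ∀ i : Fin r, ∀ v ∈ innFin (T i),
        degN (T i) v + (2 * r - Dsum T v) = r + 1 := by
      intro i v hv
      have h1 := hDeq i v hv
      have h2 := hDle v
      have h3 := mem_innFin.mp hv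
      omega
    -- sum of degrees over inner vertices
    have hsuminn : ∀ i : Fin r,
        ∑ v ∈ innFin (T i), degN (T i) v
          = Fintype.card V - 2 + (innFin (T i)).card := by
      intro i
      have hsplit := Finset.sum_sdiff (f := fun v => degN (T i) v)
        (Finset.subset_univ (innFin (T i)))
      have hleaf : ∀ v ∈ Finset.univ \ innFin (T i), degN (T i) v = 1 := by
        intro v hv
        rw [Finset.mem_sdiff] at hv
        have h1 : ¬ (2 ≤ degN (T i) v) := fun h => hv.2 (mem_innFin.mpr h)
        have h2 := hdeg1 i v
        omega
      rw [Finset.sum_congr rfl hleaf, Finset.sum_const, smul_eq_mul, mul_one,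
        Finset.card_sdiff_of_subset (Finset.subset_univ _), Finset.card_univ, hsumdeg i] at hsplit
      beta_reduce at hsplit
      have hcle : (innFin (T i)).card ≤ Fintype.card V := by
        rw [← Finset.card_univ]
        exact Finset.card_le_card (Finset.subset_univ _)
      omega
    -- main equation : a_i * r = n - 2 + L_i
    have hmain : ∀ i : Fin r,
        (innFin (T i)).card * r = Fintype.card V - 2 + Lsum T i := by
      intro i
      have h1 : ∑ v ∈ innFin (T i), (degN (T i) v + (2 * r - Dsum T v))
          = (innFin (T i)).card * (r + 1) := by
        rw [Finset.sum_congr rfl (hdeglA i), Finset.sum_const, smul_eq_mul]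
      rw [Finset.sum_add_distrib, hsuminn i] at h1
      have h4 : (innFin (T i)).card * (r + 1) = (innFin (T i)).card * r + (innFin (T i)).card := by
        ring
      rw [h4] at h1
      have h1' : Fintype.card V - 2 + (innFin (T i)).card + Lsum T i
          = (innFin (T i)).card * r + (innFin (T i)).card := h1
      have h5 : Fintype.card V - 2 + (innFin (T i)).card + Lsum T i
          = (Fintype.card V - 2 + Lsum T i) + (innFin (T i)).card := by omega
      rw [h5] at h1'
      exact (Nat.add_right_cancel h1'.symm)
    -- choose a tree with L i ≤ 2
    have hex : ∃ i : Fin r, Lsum T i ≤ 2 := by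
      by_contra hcon
      push_neg at hcon
      have h1 : ∑ _i : Fin r, 3 ≤ ∑ i, Lsum T i :=
        Finset.sum_le_sum fun i _ => hcon i
      rw [Finset.sum_const, Finset.card_univ, Fintype.card_fin, smul_eq_mul] at h1
      omega
    obtain ⟨i, hLi⟩ := hex
    -- ped (T i) = L i
    have hped : ped (Fintype.card V) r (T i) = (Lsum T i : ℤ) := by
      rw [ped, ncard_inn_eq]
      have h3 : (((innFin (T i)).card * r : ℕ) : ℤ)
          = (((Fintype.card V - 2 + Lsum T i : ℕ)) : ℤ) := by exact congrArg (fun x : ℕ => (x : ℤ)) (hmain i)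
      push_cast [Nat.cast_sub (show 2 ≤ Fintype.card V by omega)] at h3
      linarith
    -- the lost-edge count bound : 2 * |lostAt| ≤ L i
    have hcount : 2 * (lostAt G (T i)).ncard ≤ Lsum T i := by
      have hnoT : ∀ u w : V, u ∈ inn (T i) → w ∈ inn (T i) → G.Adj u w →
          s(u, w) ∉ (T i).edgeSet → ∀ j, ¬ (T j).Adj u w := by
        intro u w hu hw hadj hnotin j hTj
        by_cases hji : j = i
        · subst hji
          exact hnotin ((T j).mem_edgeSet.mpr hTj)
        · have hu2 : 2 ≤ degN (T i) u := hu
          have hw2 : 2 ≤ degN (T i) w := hw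
          have hju : degN (T j) u ≤ 1 := by
            by_contra h
            push_neg at h
            exact hji (hT.2.2 u j i h (by omega))
          have hjw : degN (T j) w ≤ 1 := by
            by_contra h
            push_neg at h
            exact hji (hT.2.2 w j i h (by omega))
          exact no_leaf_edge' (hconn j) (by omega) hTj hju hjw
      set P : Finset (V × V) := {p : V × V | p.1 ∈ inn (T i) ∧ p.2 ∈ inn (T i) ∧
          G.Adj p.1 p.2 ∧ ∀ j, ¬ (T j).Adj p.1 p.2}.toFinite.toFinset with hPdef
      have hPmem : ∀ p : V × V, p ∈ P ↔ (p.1 ∈ inn (T i) ∧ p.2 ∈ inn (T i) ∧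
          G.Adj p.1 p.2 ∧ ∀ j, ¬ (T j).Adj p.1 p.2) := by
        intro p
        rw [hPdef, Set.Finite.mem_toFinset, Set.mem_setOf_eq]
      set lostF : Finset (Sym2 V) := (lostAt G (T i)).toFinite.toFinset with hlostFdef
      have hlostmem : ∀ e, e ∈ lostF ↔ e ∈ lostAt G (T i) := fun e => Set.Finite.mem_toFinset _
      have hncardlost : (lostAt G (T i)).ncard = lostF.card := Set.ncard_eq_toFinset_card _ _
      have hmaps : ∀ p ∈ P, Sym2.mk p.1 p.2 ∈ lostF := by
        intro p hp
        obtain ⟨u, w⟩ := p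
        rw [hPmem] at hp
        obtain ⟨h1, h2, h3, h4⟩ := hp
        rw [hlostmem]
        refine ⟨(G.mem_edgeSet).mpr h3, ?_, fun hmem => h4 i ((T i).mem_edgeSet.mp hmem)⟩
        intro v hv
        rw [Sym2.mem_iff] at hv
        rcases hv with rfl | rfl
        · exact h1
        · exact h2
      have hcard1 : P.card = ∑ e ∈ lostF, (P.filter fun p => Sym2.mk p.1 p.2 = e).card :=
        Finset.card_eq_sum_card_fiberwise hmaps
      have hfiber : ∀ e ∈ lostF, 2 ≤ (P.filter fun p => Sym2.mk p.1 p.2 = e).card := by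
        intro e he
        induction e using Sym2.ind with
        | _ u w =>
          rw [hlostmem] at he
          obtain ⟨he1, he2, he3⟩ := he
          have hadj : G.Adj u w := (G.mem_edgeSet).mp he1
          have hu : u ∈ inn (T i) := he2 u (Sym2.mem_mk_left u w)
          have hw : w ∈ inn (T i) := he2 w (Sym2.mem_mk_right u w)
          have hne : u ≠ w := hadj.ne
          have hall : ∀ j, ¬ (T j).Adj u w := hnoT u w hu hw hadj he3
          have h1 : (u, w) ∈ P.filter (fun p => Sym2.mk p.1 p.2 = s(u, w)) := by
            rw [Finset.mem_filter]
            exact ⟨(hPmem (u, w)).mpr ⟨hu, hw, hadj, hall⟩, rfl⟩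
          have h2 : (w, u) ∈ P.filter (fun p => Sym2.mk p.1 p.2 = s(u, w)) := by
            rw [Finset.mem_filter]
            refine ⟨(hPmem (w, u)).mpr ⟨hw, hu, hadj.symm, fun j hj => hall j hj.symm⟩, ?_⟩
            exact Sym2.eq_swap
          have hsub2 : ({(u, w), (w, u)} : Finset (V × V)) ⊆
              P.filter (fun p => Sym2.mk p.1 p.2 = s(u, w)) := by
            intro p hp
            rcases Finset.mem_insert.mp hp with rfl | hp
            · exact h1
            · rw [Finset.mem_singleton] at hp
              subst hp
              exact h2
          have hc2 : ({(u, w), (w, u)} : Finset (V × V)).card = 2 := by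
            rw [Finset.card_insert_of_notMem, Finset.card_singleton]
            simp only [Finset.mem_singleton]
            intro hcon
            exact hne (congrArg Prod.fst hcon)
          calc (2 : ℕ) = _ := hc2.symm
            _ ≤ _ := Finset.card_le_card hsub2
      have h2L : 2 * lostF.card ≤ P.card := by
        rw [hcard1]
        calc 2 * lostF.card = ∑ _e ∈ lostF, 2 := by
              rw [Finset.sum_const, smul_eq_mul, mul_comm]
          _ ≤ _ := Finset.sum_le_sum hfiber
      have hfst : ∀ p ∈ P, p.1 ∈ innFin (T i) := by
        intro p hp
        rw [hPmem] at hp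
        exact mem_innFin.mpr hp.1
      have hPle : P.card ≤ Lsum T i := by
        rw [Finset.card_eq_sum_card_fiberwise hfst]
        unfold Lsum
        apply Finset.sum_le_sum
        intro v hv
        have hsub : ∀ p ∈ P.filter (fun p => p.1 = v),
            p.2 ∈ G.neighborFinset v \ Finset.univ.biUnion (fun j => (T j).neighborFinset v) := by
          intro p hp
          rw [Finset.mem_filter] at hp
          obtain ⟨hpP, hpv⟩ := hp
          rw [hPmem] at hpP
          rw [Finset.mem_sdiff, mem_neighborFinset]
          constructor
          · rw [← hpv]; exact hpP.2.2.1
          · rw [Finset.mem_biUnion]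
            rintro ⟨j, -, hj⟩
            rw [mem_neighborFinset] at hj
            exact hpP.2.2.2 j (hpv ▸ hj)
        have hinj : Set.InjOn (Prod.snd : V × V → V) ↑(P.filter fun p => p.1 = v) := by
          intro p hp q hq hpq
          rw [Finset.mem_coe, Finset.mem_filter] at hp hq
          exact Prod.ext (hp.2.trans hq.2.symm) hpq
        have hcard2 := Finset.card_le_card_of_injOn _ hsub hinj
        have hc3 : ((G.neighborFinset v) \ (Finset.univ.biUnion fun j => (T j).neighborFinset v)).card
            = 2 * r - Dsum T v := by
          rw [Finset.card_sdiff_of_subset (hsubN v), hDcard v, card_neighborFinset_eq_degree,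
            ← degN_eq_degree, hreg v]
        rw [← hc3]
        exact hcard2
      rw [hncardlost]
      omega
    refine ⟨i, ?_, ?_, ?_⟩
    · rw [hped]
      exact_mod_cast hLi
    · omega
    · intro hdvd
      have hL1 : Lsum T i ≤ 1 := by
        rcases Nat.lt_or_ge (Lsum T i) 2 with h | h
        · omega
        · exfalso
          have hL2 : Lsum T i = 2 := by omega
          have := hmain i
          rw [hL2] at this
          have hn : (innFin (T i)).card * r = Fintype.card V := by omega
          refine hdvd ⟨(innFin (T i)).card, ?_⟩
          rw [← hn, mul_comm]
      constructor
      · rw [hped]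
        exact_mod_cast (by omega : Lsum T i < 2)
      · have h0 : (lostAt G (T i)).ncard = 0 := by omega
        exact (Set.ncard_eq_zero (Set.toFinite _)).mp h0
end

section
/- For all integers n ≥ 2 and r ≥ 2, there exist r completely independent spanning trees in the Cartesian product K_{2r} □ P_n of the complete graph on 2r vertices and the path on n vertices. -/
open SimpleGraph

namespace CISTAux

variable {V : Type*}

/-- Graph defined by a parent function. -/
def pGraph (p : V → V) : SimpleGraph V := SimpleGraph.fromRel (fun u v => p u = v)

lemma pGraph_adj (p : V → V) (u v : V) :
    (pGraph p).Adj u v ↔ u ≠ v ∧ (p u = v ∨ p v = u) := by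
  simp [pGraph, fromRel_adj]

variable {p : V → V} {h : V → ℕ} {ρ : V}

lemma parent_ne_aux (hρ : p ρ = ρ) (hlt : ∀ v, v ≠ ρ → h (p v) < h v)
    {x u : V} (hx : p x = u) (hne : x ≠ u) : h u < h x := by
  have : x ≠ ρ := by rintro rfl; rw [hρ] at hx; exact hne hx
  simpa [hx] using hlt x this

lemma pGraph_connected (hρ : p ρ = ρ) (hlt : ∀ v, v ≠ ρ → h (p v) < h v) :
    (pGraph p).Connected := by
  have key : ∀ m v, h v ≤ m → (pGraph p).Reachable v ρ := by
    intro m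
    induction m with
    | zero =>
      intro v hv
      by_cases hvρ : v = ρ
      · subst hvρ; exact Reachable.refl _
      · exact absurd (Nat.lt_of_lt_of_le (hlt v hvρ) hv) (Nat.not_lt_zero _)
    | succ m ih =>
      intro v hv
      by_cases hvρ : v = ρ
      · subst hvρ; exact Reachable.refl _
      · have hlt' := hlt v hvρ
        have hpv : p v ≠ v := by
          intro hh; rw [hh] at hlt'; omega
        have hadj : (pGraph p).Adj v (p v) := by
          rw [pGraph_adj]; exact ⟨fun e => hpv e.symm, Or.inl rfl⟩
        exact hadj.reachable.trans (ih (p v) (by omega))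
  rw [connected_iff]
  exact ⟨fun u v => (key (h u) u le_rfl).trans (key (h v) v le_rfl).symm, ⟨ρ⟩⟩

lemma pGraph_acyclic [DecidableEq V] (hρ : p ρ = ρ) (hlt : ∀ v, v ≠ ρ → h (p v) < h v) :
    (pGraph p).IsAcyclic := by
  intro v c hc
  -- pick a vertex of maximal height in the support tail
  have htne : c.support.tail ≠ [] := by
    cases c with
    | nil => exact absurd hc (by simp [Walk.isCycle_def])
    | cons ha q => simp
  obtain ⟨u, humem⟩ : ∃ u, u ∈ c.support.tail.argmax h := by
    rcases Option.eq_none_or_eq_some (c.support.tail.argmax h) with he | ⟨u, hu⟩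
    · exact absurd (List.argmax_eq_none.mp he) htne
    · exact ⟨u, hu⟩
  have hu : u ∈ c.support.tail := List.argmax_mem humem
  have hmax : ∀ z ∈ c.support.tail, h z ≤ h u :=
    fun z hz => Nat.le_of_not_lt (List.not_lt_of_mem_argmax hz humem)
  have hu' : u ∈ c.support := List.mem_of_mem_tail hu
  set c' := c.rotate u hu' with hc'
  have hcyc : c'.IsCycle := hc.rotate hu'
  have hsupp : ∀ z ∈ c'.support.tail, h z ≤ h u := by
    intro z hz
    exact hmax z ((Walk.support_rotate c u hu').mem_iff.mp hz)
  clear_value c'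
  cases c' with
  | nil => exact absurd hcyc (by simp [Walk.isCycle_def])
  | @cons _ x _ ha q =>
    rw [Walk.cons_isCycle_iff] at hcyc
    obtain ⟨hq, hedge⟩ := hcyc
    -- first neighbor x
    have hx : h x ≤ h u := hsupp x (by simp [Walk.support_cons, Walk.start_mem_support])
    have hpux : p u = x := by
      rcases (pGraph_adj p u x).mp ha with ⟨hne, hor | hor⟩
      · exact hor
      · exact absurd hx (by
          have := parent_ne_aux hρ hlt hor (fun e => hne e.symm)
          omega)
    -- last neighbor y via reverse of q
    have hux : u ≠ x := ((pGraph_adj p u x).mp ha).1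
    have hqnil : ¬ q.reverse.Nil := Walk.not_nil_of_ne hux
    obtain ⟨y, hb, q2, hq2⟩ := Walk.not_nil_iff.mp hqnil
    have hyedge : s(u, y) ∈ q.edges := by
      have : s(u, y) ∈ q.reverse.edges := by rw [hq2]; simp
      rwa [Walk.edges_reverse, List.mem_reverse] at this
    have hy : h y ≤ h u := by
      apply hsupp
      have : y ∈ q.reverse.support := by rw [hq2]; simp [Walk.support_cons]
      rw [Walk.support_reverse, List.mem_reverse] at this
      simpa [Walk.support_cons] using this
    have hpuy : p u = y := by
      rcases (pGraph_adj p u y).mp hb with ⟨hne, hor | hor⟩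
      · exact hor
      · exact absurd hy (by
          have := parent_ne_aux hρ hlt hor (fun e => hne e.symm)
          omega)
    have hxy : x = y := by rw [← hpux, hpuy]
    exact hedge (by rwa [← hxy] at hyedge)


/-! ### The concrete construction -/

/-- Attachment vertex for leaf `v` in tree `i`. -/
def xfun (r : ℕ) (i : Fin r) (v : Fin (2*r)) : Fin (2*r) :=
  if i.1 < v.1 / 2 then ⟨2*i.1 + v.1 % 2, by have := i.2; omega⟩
  else ⟨2*i.1 + (1 - v.1 % 2), by have := i.2; omega⟩

lemma xfun_val (r : ℕ) (i : Fin r) (v : Fin (2*r)) :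
    (xfun r i v).1 = 2*i.1 + (if i.1 < v.1 / 2 then v.1 % 2 else 1 - v.1 % 2) := by
  unfold xfun; split_ifs <;> rfl

/-- Parent function for tree `i` in `K_{2r} □ P_n`. -/
def par (n r : ℕ) (i : Fin r) (w : Fin (2*r) × Fin n) : Fin (2*r) × Fin n :=
  if w.1.1 / 2 = i.1 then
    if w.1.1 % 2 = 1 then (⟨2*i.1, by have := i.2; omega⟩, w.2)
    else (⟨2*i.1, by have := i.2; omega⟩, ⟨w.2.1 - 1, by have := w.2.2; omega⟩)
  else (xfun r i w.1, w.2)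

/-- Height function. -/
def hgt (n r : ℕ) (i : Fin r) (w : Fin (2*r) × Fin n) : ℕ :=
  3 * w.2.1 + (if w.1.1 / 2 = i.1 then w.1.1 % 2 else 2)

lemma par_fst_div (n r : ℕ) (i : Fin r) (w : Fin (2*r) × Fin n) :
    (par n r i w).1.1 / 2 = i.1 := by
  unfold par
  split_ifs <;> simp [xfun_val] <;> split_ifs <;> omega

lemma par_shape (n r : ℕ) (i : Fin r) (w : Fin (2*r) × Fin n) :
    (par n r i w).2 = w.2 ∨
      ((par n r i w).1 = w.1 ∧ w.1.1 = 2*i.1 ∧ (par n r i w).2.1 = w.2.1 - 1) := by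
  unfold par
  split_ifs with h1 h2
  · left; rfl
  · right
    refine ⟨?_, by omega, rfl⟩
    exact Fin.ext (by simp; omega)
  · left; rfl

lemma par_of_ne (n r : ℕ) (i : Fin r) (w : Fin (2*r) × Fin n)
    (h : w.1.1 / 2 ≠ i.1) : par n r i w = (xfun r i w.1, w.2) := by
  unfold par; rw [if_neg h]

def rt (n r : ℕ) (hn : 0 < n) (i : Fin r) : Fin (2*r) × Fin n :=
  (⟨2*i.1, by have := i.2; omega⟩, ⟨0, hn⟩)

lemma par_rt (n r : ℕ) (hn : 0 < n) (i : Fin r) :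
    par n r i (rt n r hn i) = rt n r hn i := by
  unfold par rt
  rw [if_pos (by show 2*i.1/2 = i.1; omega), if_neg (by show ¬ 2*i.1 % 2 = 1; omega)]
  rfl

lemma hgt_lt (n r : ℕ) (hn : 0 < n) (i : Fin r) (w : Fin (2*r) × Fin n)
    (hw : w ≠ rt n r hn i) : hgt n r i (par n r i w) < hgt n r i w := by
  have hd := par_fst_div n r i w
  unfold hgt
  rw [if_pos hd]
  by_cases h1 : w.1.1 / 2 = i.1
  · rw [if_pos h1]
    unfold par
    rw [if_pos h1]
    by_cases h2 : w.1.1 % 2 = 1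
    · rw [if_pos h2]; simp; omega
    · rw [if_neg h2]
      simp only
      have hj : w.2.1 ≠ 0 := by
        intro h0
        apply hw
        unfold rt
        have : w.1.1 = 2*i.1 := by omega
        exact Prod.ext (Fin.ext (by simpa using this)) (Fin.ext (by simpa using h0))
      simp; omega
  · rw [if_neg h1, par_of_ne n r i w h1]
    simp only [xfun_val]
    split_ifs <;> omega

lemma par_le (n r : ℕ) (i : Fin r) (w : Fin (2*r) × Fin n)
    (hne : w ≠ par n r i w) :
    ((⊤ : SimpleGraph (Fin (2*r))) □ pathGraph n).Adj w (par n r i w) := by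
  rcases par_shape n r i w with hsh | ⟨hrow, hval, hlay⟩
  · -- same layer, different rows
    have hrows : w.1 ≠ (par n r i w).1 := by
      intro he
      exact hne (Prod.ext he hsh.symm)
    rw [boxProd_adj]
    left
    exact ⟨(top_adj _ _).mpr hrows, hsh.symm⟩
  · -- same row, adjacent layers
    have hlays : w.2 ≠ (par n r i w).2 := by
      intro he
      exact hne (Prod.ext hrow.symm he)
    have hj : w.2.1 ≠ 0 := by
      intro h0
      exact hlays (Fin.ext (by omega))
    rw [boxProd_adj]
    right
    refine ⟨?_, hrow.symm⟩
    rw [pathGraph_adj]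
    right
    omega

lemma tree_le (n r : ℕ) (i : Fin r) :
    pGraph (par n r i) ≤ ((⊤ : SimpleGraph (Fin (2*r))) □ pathGraph n) := by
  intro u v huv
  rcases (pGraph_adj _ u v).mp huv with ⟨hne, hp | hp⟩
  · have := par_le n r i u (by rw [hp]; exact hne)
    rwa [hp] at this
  · have := par_le n r i v (by rw [hp]; exact hne.symm)
    rw [hp] at this
    exact this.symm

lemma leaf_deg (n r : ℕ) (i : Fin r) (w : Fin (2*r) × Fin n)
    (hq : w.1.1 / 2 ≠ i.1) : degN (pGraph (par n r i)) w ≤ 1 := by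
  have hsub : (pGraph (par n r i)).neighborSet w ⊆ {par n r i w} := by
    intro u hu
    rcases (pGraph_adj _ w u).mp hu with ⟨hne, hp | hp⟩
    · exact hp ▸ rfl
    · exact absurd (hp ▸ par_fst_div n r i u) hq
  calc degN (pGraph (par n r i)) w ≤ ({par n r i w} : Set _).ncard :=
        Set.ncard_le_ncard hsub (Set.finite_singleton _)
    _ = 1 := Set.ncard_singleton _

lemma inner_div (n r : ℕ) (i : Fin r) (w : Fin (2*r) × Fin n)
    (hd : 1 < degN (pGraph (par n r i)) w) : w.1.1 / 2 = i.1 := by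
  by_contra hq
  exact absurd hd (by have := leaf_deg n r i w hq; omega)

lemma edge_mem (n r : ℕ) (i : Fin r) (e : Sym2 (Fin (2*r) × Fin n))
    (he : e ∈ (pGraph (par n r i)).edgeSet) :
    ∃ u, u ≠ par n r i u ∧ e = s(u, par n r i u) := by
  induction e with
  | _ a b =>
    rw [mem_edgeSet, pGraph_adj] at he
    rcases he with ⟨hne, hp | hp⟩
    · exact ⟨a, by rw [hp]; exact ⟨hne, rfl⟩⟩
    · exact ⟨b, by rw [hp]; exact ⟨hne.symm, Sym2.eq_swap⟩⟩

lemma edge_disj (n r : ℕ) (i j : Fin r) (hij : i ≠ j) :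
    Disjoint (pGraph (par n r i)).edgeSet (pGraph (par n r j)).edgeSet := by
  rw [Set.disjoint_left]
  intro e hei hej
  obtain ⟨u, hu, rfl⟩ := edge_mem n r i e hei
  obtain ⟨w, hw, hew⟩ := edge_mem n r j _ hej
  have hij' : i.1 ≠ j.1 := fun h => hij (Fin.ext h)
  rw [Sym2.eq_iff] at hew
  rcases hew with ⟨rfl, heq⟩ | ⟨h1, h2⟩
  · -- same child, same parent in both trees
    rcases par_shape n r i u with hi | ⟨hi1, hi2, hi3⟩ <;>
      rcases par_shape n r j u with hj | ⟨hj1, hj2, hj3⟩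
    · -- both horizontal: parent rows determine i = j
      have d1 := par_fst_div n r i u
      have d2 := par_fst_div n r j u
      rw [heq] at d1
      omega
    · -- i horizontal, j vertical
      have h2 : (par n r j u).2 = u.2 := by rw [← heq]; exact hi
      exact hw (Prod.ext hj1 h2).symm
    · -- i vertical, j horizontal
      have h2 : (par n r i u).2 = u.2 := by rw [heq]; exact hj
      exact hu (Prod.ext hi1 h2).symm
    · omega
  · -- crossed: u = par j w, w = par i u
    have d1 : u.1.1 / 2 = j.1 := by rw [h1]; exact par_fst_div n r j w
    have d2 : w.1.1 / 2 = i.1 := by rw [← h2]; exact par_fst_div n r i u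
    have hxi : par n r i u = (xfun r i u.1, u.2) := par_of_ne n r i u (by omega)
    have hxj : par n r j w = (xfun r j w.1, w.2) := par_of_ne n r j w (by omega)
    have e1 : w.1.1 = (xfun r i u.1).1 := by rw [← h2, hxi]
    have e2 : u.1.1 = (xfun r j w.1).1 := by rw [h1, hxj]
    rw [xfun_val] at e1 e2
    split_ifs at e1 e2 <;> omega

end CISTAux

/-- For all `n ≥ 2` and `r ≥ 2`, there exist `r` completely independent spanning
trees in `K_{2r} □ P_n`. -/
theorem stmt_8 (n r : ℕ) (hn : 2 ≤ n) (hr : 2 ≤ r) :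
    ∃ T : Fin r → SimpleGraph (Fin (2 * r) × Fin n),
      AreCISTs ((⊤ : SimpleGraph (Fin (2 * r))) □ pathGraph n) T := by
  have hn0 : 0 < n := by omega
  refine ⟨fun i => CISTAux.pGraph (CISTAux.par n r i), ?_, ?_, ?_⟩
  · intro i
    refine ⟨CISTAux.tree_le n r i, ?_⟩
    rw [isTree_iff]
    exact ⟨CISTAux.pGraph_connected (CISTAux.par_rt n r hn0 i) (CISTAux.hgt_lt n r hn0 i),
      CISTAux.pGraph_acyclic (CISTAux.par_rt n r hn0 i) (CISTAux.hgt_lt n r hn0 i)⟩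
  · exact fun i j hij => CISTAux.edge_disj n r i j hij
  · intro v i j hi hj
    have h1 := CISTAux.inner_div n r i v hi
    have h2 := CISTAux.inner_div n r j v hj
    exact Fin.ext (by omega)
end

section
/- For all integers n ≥ 3 and r ≥ 2, there exist r completely independent spanning trees in the Cartesian product K_{2r} □ C_n of the complete graph on 2r vertices and the cycle on n vertices. -/
open SimpleGraph

namespace PTree

open SimpleGraph Walk

variable {V : Type*}

/-- The graph generated by a parent function `p` with root `root`. -/
def pGraph (root : V) (p : V → V) : SimpleGraph V :=
  SimpleGraph.fromRel (fun a b => a ≠ root ∧ p a = b)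

lemma pGraph_adj {root : V} {p : V → V} {a b : V} :
    (pGraph root p).Adj a b ↔ a ≠ b ∧ ((a ≠ root ∧ p a = b) ∨ (b ≠ root ∧ p b = a)) := by
  simp [pGraph, fromRel_adj]

variable {root : V} {p : V → V} {m : V → ℕ}

lemma pGraph_reach (hm : ∀ v, v ≠ root → m (p v) < m v) (v : V) :
    (pGraph root p).Reachable v root := by
  by_cases h : v = root
  · exact h ▸ Reachable.refl _
  · have hlt := hm v h
    have hadj : (pGraph root p).Adj v (p v) := by
      rw [pGraph_adj]
      exact ⟨fun he => absurd hlt (by rw [← he]; exact lt_irrefl _), Or.inl ⟨h, rfl⟩⟩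
    exact hadj.reachable.trans (pGraph_reach hm (p v))
termination_by m v
decreasing_by exact hlt

lemma pGraph_connected (hm : ∀ v, v ≠ root → m (p v) < m v) :
    (pGraph root p).Connected := by
  rw [connected_iff]
  exact ⟨fun u v => (pGraph_reach hm u).trans (pGraph_reach hm v).symm, ⟨root⟩⟩

lemma pGraph_acyclic (hm : ∀ v, v ≠ root → m (p v) < m v) :
    (pGraph root p).IsAcyclic := by
  classical
  intro a c hc
  obtain ⟨v, hv, hmax⟩ := c.support.toFinset.exists_max_image m
    ⟨a, List.mem_toFinset.mpr c.start_mem_support⟩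
  have hv' : v ∈ c.support := List.mem_toFinset.mp hv
  have hmax' : ∀ x ∈ c.support, m x ≤ m v := fun x hx => hmax x (List.mem_toFinset.mpr hx)
  have hsupp : ∀ x ∈ (c.rotate v hv').support, m x ≤ m v := by
    intro x hx
    rcases (Walk.mem_support_iff _).mp hx with rfl | hx'
    · exact le_rfl
    · exact hmax' x (List.mem_of_mem_tail
        (((Walk.support_rotate c v hv').mem_iff).mp hx'))
  have hc' := hc.rotate hv'
  obtain ⟨u, h1, q, hq⟩ := Walk.not_nil_iff.mp hc'.not_nil
  rw [hq] at hc' hsupp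
  have h3 : 3 ≤ (Walk.cons h1 q).length := hc'.three_le_length
  have hql : 2 ≤ q.length := by simpa using h3
  have hqrev : ¬ q.reverse.Nil := by
    rw [Walk.not_nil_iff_lt_length, Walk.length_reverse]; omega
  obtain ⟨w, h2, q2, hq2⟩ := Walk.not_nil_iff.mp hqrev
  have hvw : s(v, w) ∈ q.edges := by
    have : s(v, w) ∈ q.reverse.edges := by rw [hq2]; simp
    rwa [Walk.edges_reverse, List.mem_reverse] at this
  have huw : u ≠ w := by
    rintro rfl
    have hnodup := hc'.edges_nodup
    rw [Walk.edges_cons] at hnodup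
    exact (List.nodup_cons.mp hnodup).1 hvw
  have hmu : m u ≤ m v := hsupp u (by simp [q.start_mem_support])
  have hmw : m w ≤ m v := by
    refine hsupp w ?_
    have : w ∈ q.support := by
      have : w ∈ q.reverse.support := by rw [hq2]; simp
      rwa [Walk.support_reverse, List.mem_reverse] at this
    simp [this]
  have hpu : p v = u := by
    rcases (pGraph_adj.mp h1).2 with ⟨_, h⟩ | ⟨hur, h⟩
    · exact h
    · exact absurd (h ▸ hm u hur) (by omega)
  have hpw : p v = w := by
    rcases (pGraph_adj.mp h2).2 with ⟨_, h⟩ | ⟨hur, h⟩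
    · exact h
    · exact absurd (h ▸ hm w hur) (by omega)
  exact huw (hpu ▸ hpw)

lemma pGraph_isTree (hm : ∀ v, v ≠ root → m (p v) < m v) :
    (pGraph root p).IsTree :=
  ⟨pGraph_connected hm, pGraph_acyclic hm⟩

lemma pGraph_edgeSet (hm : ∀ v, v ≠ root → m (p v) < m v) :
    (pGraph root p).edgeSet = (fun v => s(v, p v)) '' {v | v ≠ root} := by
  ext e
  refine Sym2.ind (fun a b => ?_) e
  rw [SimpleGraph.mem_edgeSet, pGraph_adj]
  constructor
  · rintro ⟨hne, ⟨ha, rfl⟩ | ⟨hb, rfl⟩⟩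
    · exact ⟨a, ha, rfl⟩
    · exact ⟨b, hb, Sym2.eq_swap⟩
  · rintro ⟨x, hx, hex⟩
    have hxp : x ≠ p x := fun he => absurd (hm x hx) (by rw [← he]; exact lt_irrefl _)
    rcases Sym2.eq_iff.mp hex with ⟨rfl, rfl⟩ | ⟨h1, h2⟩
    · exact ⟨hxp, Or.inl ⟨hx, rfl⟩⟩
    · subst h1; subst h2
      exact ⟨fun h => hxp h.symm, Or.inr ⟨hx, rfl⟩⟩

lemma pGraph_leaf (hm : ∀ v, v ≠ root → m (p v) < m v) (v : V)
    (hv : ∀ u, u ≠ root → p u ≠ v) :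
    degN (pGraph root p) v ≤ 1 := by
  have hsub : (pGraph root p).neighborSet v ⊆ {p v} := by
    intro u hu
    rcases (pGraph_adj.mp hu).2 with ⟨_, h⟩ | ⟨hur, h⟩
    · exact h ▸ rfl
    · exact absurd h (hv u hur)
  calc degN (pGraph root p) v ≤ ({p v} : Set V).ncard :=
        Set.ncard_le_ncard hsub (Set.finite_singleton _)
    _ = 1 := Set.ncard_singleton _

end PTree


namespace CIST

/-- The parent function of the `k`-th tree. -/
def pf {r n : ℕ} (k : Fin r) (v : Fin (2 * r) × Fin n) : Fin (2 * r) × Fin n :=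
  if v.1.val = 2 * k.val then
    (⟨2 * k.val, by have := k.isLt; omega⟩, ⟨v.2.val - 1, by have := v.2.isLt; omega⟩)
  else if v.1.val = 2 * k.val + 1 then
    (⟨2 * k.val, by have := k.isLt; omega⟩, v.2)
  else
    (⟨2 * k.val + (if k.val < v.1.val / 2 then v.1.val % 2 else 1 - v.1.val % 2),
      by have := k.isLt; split <;> omega⟩, v.2)

/-- The root of the `k`-th tree. -/
def rootF {r n : ℕ} (hn : 0 < n) (k : Fin r) : Fin (2 * r) × Fin n :=
  (⟨2 * k.val, by have := k.isLt; omega⟩, ⟨0, hn⟩)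

/-- The measure. -/
def mf {r n : ℕ} (k : Fin r) (v : Fin (2 * r) × Fin n) : ℕ :=
  2 * v.2.val + (if v.1.val = 2 * k.val then 0 else if v.1.val = 2 * k.val + 1 then 1 else 2)

lemma pf_row {r n : ℕ} (k : Fin r) (v : Fin (2 * r) × Fin n) :
    (pf k v).1.val = if v.1.val = 2 * k.val then 2 * k.val
      else if v.1.val = 2 * k.val + 1 then 2 * k.val
      else 2 * k.val + (if k.val < v.1.val / 2 then v.1.val % 2 else 1 - v.1.val % 2) := by
  rw [pf]; split_ifs <;> rfl

lemma pf_col {r n : ℕ} (k : Fin r) (v : Fin (2 * r) × Fin n) :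
    (pf k v).2.val = if v.1.val = 2 * k.val then v.2.val - 1 else v.2.val := by
  rw [pf]; split_ifs <;> rfl

lemma pf_row_div {r n : ℕ} (k : Fin r) (v : Fin (2 * r) × Fin n) :
    (pf k v).1.val / 2 = k.val := by
  rw [pf_row]; split_ifs <;> omega

lemma mf_dec {r n : ℕ} (hn : 0 < n) (k : Fin r) :
    ∀ v : Fin (2 * r) × Fin n, v ≠ rootF hn k → mf k (pf k v) < mf k v := by
  intro v hv
  have hv0 : v.1.val = 2 * k.val → v.2.val ≠ 0 :=
    fun h1 h2 => hv (Prod.ext (Fin.ext h1) (Fin.ext h2))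
  rw [mf, mf, pf_row, pf_col]
  split_ifs at * <;> omega


lemma cyc_adj {n : ℕ} (hn : 3 ≤ n) (i : Fin n) (h0 : i.val ≠ 0) :
    (cycleGraph n).Adj i ⟨i.val - 1, by have := i.isLt; omega⟩ := by
  rw [cycleGraph_adj']
  left
  show ((n - (i.val - 1)) + i.val) % n = 1
  have h1 : (n - (i.val - 1)) + i.val = n + 1 := by have := i.isLt; omega
  rw [h1, Nat.add_mod_left, Nat.mod_eq_of_lt (by omega)]

lemma adj_pf {r n : ℕ} (hn : 3 ≤ n) (hn0 : 0 < n) (k : Fin r) (v : Fin (2 * r) × Fin n)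
    (hv : v ≠ rootF hn0 k) :
    ((⊤ : SimpleGraph (Fin (2 * r))) □ cycleGraph n).Adj v (pf k v) := by
  rw [boxProd_adj]
  by_cases h1 : v.1.val = 2 * k.val
  · right
    have h0 : v.2.val ≠ 0 := fun h2 => hv (Prod.ext (Fin.ext h1) (Fin.ext h2))
    have hpf : pf k v = (⟨2 * k.val, by have := k.isLt; omega⟩,
        ⟨v.2.val - 1, by have := v.2.isLt; omega⟩) := by rw [pf, if_pos h1]
    rw [hpf]
    exact ⟨cyc_adj hn v.2 h0, Fin.ext h1⟩
  · left
    refine ⟨?_, Fin.ext (by rw [pf_col, if_neg h1])⟩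
    rw [top_adj]
    have hne : v.1.val ≠ (pf k v).1.val := by rw [pf_row]; split_ifs <;> omega
    exact fun he => hne (by rw [he])

lemma le_G {r n : ℕ} (hn : 3 ≤ n) (hn0 : 0 < n) (k : Fin r) :
    PTree.pGraph (rootF hn0 k) (pf k) ≤ ((⊤ : SimpleGraph (Fin (2 * r))) □ cycleGraph n) := by
  intro a b hab
  rcases (PTree.pGraph_adj.mp hab).2 with ⟨ha, hpa⟩ | ⟨hb, hpb⟩
  · exact hpa ▸ adj_pf hn hn0 k a ha
  · exact (hpb ▸ adj_pf hn hn0 k b hb).symm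

lemma deg_le {r n : ℕ} (hn0 : 0 < n) (k : Fin r) (v : Fin (2 * r) × Fin n)
    (hrow : v.1.val / 2 ≠ k.val) :
    degN (PTree.pGraph (rootF hn0 k) (pf k)) v ≤ 1 := by
  refine PTree.pGraph_leaf (mf_dec hn0 k) v (fun u hu hpu => hrow ?_)
  rw [← hpu]
  exact pf_row_div k u

lemma disj {r n : ℕ} (hn0 : 0 < n) (k l : Fin r) (hkl : k ≠ l) :
    Disjoint (PTree.pGraph (rootF hn0 k) (pf k)).edgeSet
      (PTree.pGraph (rootF hn0 l) (pf l)).edgeSet := by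
  rw [Set.disjoint_left]
  intro e hek hel
  rw [PTree.pGraph_edgeSet (mf_dec hn0 k)] at hek
  rw [PTree.pGraph_edgeSet (mf_dec hn0 l)] at hel
  obtain ⟨v, hv, hev⟩ := hek
  obtain ⟨u, hu, heu⟩ := hel
  have hE : s(v, pf k v) = s(u, pf l u) := by
    simp only at hev heu; rw [hev, heu]
  have hkl' : k.val ≠ l.val := fun h => hkl (Fin.ext h)
  have hv0 : v.1.val ≠ 2 * k.val ∨ v.2.val ≠ 0 := by
    by_contra h
    push_neg at h
    exact hv (Prod.ext (Fin.ext h.1) (Fin.ext h.2))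
  have hu0 : u.1.val ≠ 2 * l.val ∨ u.2.val ≠ 0 := by
    by_contra h
    push_neg at h
    exact hu (Prod.ext (Fin.ext h.1) (Fin.ext h.2))
  have key : ∀ (x y : Fin (2 * r) × Fin n), x = y → x.1.val = y.1.val ∧ x.2.val = y.2.val :=
    fun x y h => by rw [h]; exact ⟨rfl, rfl⟩
  rw [Sym2.eq_iff] at hE
  rcases hE with ⟨h1, h2⟩ | ⟨h1, h2⟩ <;>
    obtain ⟨h1r, h1c⟩ := key _ _ h1 <;>
    obtain ⟨h2r, h2c⟩ := key _ _ h2 <;>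
    simp only [pf_row, pf_col] at h1r h1c h2r h2c <;>
    split_ifs at h1r h1c h2r h2c <;>
    omega

end CIST


/-- For all `n ≥ 3` and `r ≥ 2`, there exist `r` completely independent spanning
trees in `K_{2r} □ C_n`. -/
theorem stmt_9 (n r : ℕ) (hn : 3 ≤ n) (hr : 2 ≤ r) :
    ∃ T : Fin r → SimpleGraph (Fin (2 * r) × Fin n),
      AreCISTs ((⊤ : SimpleGraph (Fin (2 * r))) □ cycleGraph n) T := by
  have hn0 : 0 < n := by omega
  refine ⟨fun k => PTree.pGraph (CIST.rootF hn0 k) (CIST.pf k), fun k => ⟨?_, ?_⟩,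
    fun i j hij => ?_, fun v i j hi hj => ?_⟩
  · exact CIST.le_G hn hn0 k
  · exact PTree.pGraph_isTree (CIST.mf_dec hn0 k)
  · exact CIST.disj hn0 i j hij
  · by_contra hne
    have hj' : v.1.val / 2 = j.val := by
      by_contra h
      exact absurd hj (by simpa using CIST.deg_le hn0 j v h)
    have hi' : v.1.val / 2 = i.val := by
      by_contra h
      exact absurd hi (by simpa using CIST.deg_le hn0 i v h)
    exact hne (Fin.ext (by omega))
end

section
/- For every integer n ≥ 3 with n ≡ 0 (mod 3), there exist three completely independent spanning trees in the Cartesian product K_5 □ C_n of the complete graph on 5 vertices and the cycle on n vertices. -/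
open SimpleGraph

section PTree

variable {V : Type*} (p : V → V) (root : V) (ρ : V → ℕ)

/-- The graph induced by a parent function. -/
def ptree : SimpleGraph V :=
  SimpleGraph.fromRel (fun x y => x ≠ root ∧ p x = y)

lemma ptree_adj {x y : V} :
    (ptree p root).Adj x y ↔ x ≠ y ∧ ((x ≠ root ∧ p x = y) ∨ (y ≠ root ∧ p y = x)) := by
  simp [ptree, SimpleGraph.fromRel_adj]

variable (hρ : ∀ v, v ≠ root → ρ (p v) < ρ v)

include hρ

lemma ptree_adj_parent {v : V} (hv : v ≠ root) : (ptree p root).Adj v (p v) := by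
  rw [ptree_adj]
  have := hρ v hv
  exact ⟨fun h => by rw [← h] at this; omega, Or.inl ⟨hv, rfl⟩⟩

lemma ptree_reach (v : V) : (ptree p root).Reachable v root := by
  by_cases hv : v = root
  · exact hv ▸ Reachable.refl _
  · have h1 := hρ v hv
    have : Reachable (ptree p root) (p v) root := ptree_reach (p v)
    exact ((ptree_adj_parent p root ρ hρ hv).reachable).trans this
termination_by ρ v
decreasing_by exact hρ v hv

lemma ptree_connected [Nonempty V] : (ptree p root).Connected := by
  rw [connected_iff]
  refine ⟨fun u v => (ptree_reach p root ρ hρ u).trans (ptree_reach p root ρ hρ v).symm, ‹_›⟩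

lemma ptree_ascend {a b : V} (q : (ptree p root).Walk a b) (hq : q.IsPath)
    (hz : p a ∉ q.support) : ρ a ≤ ρ b := by
  induction q with
  | nil => exact le_refl _
  | @cons a v b h q ih =>
      rw [Walk.support_cons] at hz
      simp only [List.mem_cons, not_or] at hz
      obtain ⟨hz1, hz2⟩ := hz
      have hpv : p v = a ∧ v ≠ root := by
        rw [ptree_adj] at h
        rcases h.2 with ⟨_, h2⟩ | ⟨h1, h2⟩
        · exact absurd (h2 ▸ q.start_mem_support) hz2
        · exact ⟨h2, h1⟩
      have hlt : ρ a < ρ v := hpv.1 ▸ hρ v hpv.2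
      have hq' : q.IsPath := hq.of_cons
      have ha : a ∉ q.support := by
        intro hc
        exact (Walk.cons_isPath_iff _ _ |>.mp hq).2 hc
      have := ih hq' (hpv.1 ▸ ha)
      omega

lemma ptree_acyclic : (ptree p root).IsAcyclic := by
  rw [isAcyclic_iff_forall_adj_isBridge]
  intro v w hvw
  rw [isBridge_iff_adj_and_forall_walk_mem_edges]
  intro q
  by_contra he
  classical
  -- wlog-style: handle both orientations of the edge
  rw [ptree_adj] at hvw
  obtain ⟨hne, hor⟩ := hvw
  have key : ∀ x y : V, x ≠ y → x ≠ root → p x = y →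
      ∀ (q : (ptree p root).Walk x y), s(x, y) ∉ q.edges → False := by
    intro x y hxy hxr hpx q hq
    have hqp : ∃ (q' : (ptree p root).Walk x y), q'.IsPath ∧ s(x, y) ∉ q'.edges := by
      refine ⟨q.toPath, q.toPath.2, fun hc => hq (q.edges_toPath_subset hc)⟩
    obtain ⟨q', hq'p, hq'e⟩ := hqp
    cases q' with
    | nil => exact hxy rfl
    | @cons _ v _ h q2 =>
        -- first step x to v
        by_cases hv : v = y
        · subst hv
          exact hq'e (by simp [Walk.edges_cons])
        · have hpv : p v = x ∧ v ≠ root := by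
            rw [ptree_adj] at h
            rcases h.2 with ⟨_, h2⟩ | ⟨h1, h2⟩
            · exact absurd (by rw [← h2, hpx]) hv
            · exact ⟨h2, h1⟩
          have hx2 : x ∉ q2.support := (Walk.cons_isPath_iff _ _ |>.mp hq'p).2
          have hasc : ρ v ≤ ρ y :=
            ptree_ascend p root ρ hρ q2 hq'p.of_cons (hpv.1 ▸ hx2)
          have h1 : ρ (p x) < ρ x := hρ x hxr
          have h2 : ρ x < ρ v := hpv.1 ▸ hρ v hpv.2
          rw [hpx] at h1
          omega
  rcases hor with ⟨h1, h2⟩ | ⟨h1, h2⟩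
  · exact key v w hne h1 h2 q he
  · exact key w v (Ne.symm hne) h1 h2 q.reverse (by
      rw [Walk.edges_reverse]
      simp only [List.mem_reverse]
      rw [Sym2.eq_swap]
      exact he)


lemma ptree_isTree [Nonempty V] : (ptree p root).IsTree :=
  ⟨ptree_connected p root ρ hρ, ptree_acyclic p root ρ hρ⟩

lemma ptree_neighborSet {v : V} (hv : v ≠ root)
    (hnc : ∀ u, u ≠ root → p u ≠ v) :
    (ptree p root).neighborSet v = {p v} := by
  ext y
  simp only [mem_neighborSet, Set.mem_singleton_iff, ptree_adj]
  constructor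
  · rintro ⟨hne, ⟨_, h⟩ | ⟨h1, h2⟩⟩
    · exact h.symm
    · exact absurd h2 (hnc y h1)
  · rintro rfl
    exact (ptree_adj_parent p root ρ hρ hv)

lemma ptree_degN_eq_one {v : V} (hv : v ≠ root)
    (hnc : ∀ u, u ≠ root → p u ≠ v) :
    degN (ptree p root) v = 1 := by
  rw [degN, ptree_neighborSet p root ρ hρ hv hnc]
  exact Set.ncard_singleton _

omit hρ

lemma ptree_le (G : SimpleGraph V) (hsub : ∀ v, v ≠ root → G.Adj v (p v)) :
    ptree p root ≤ G := by
  intro a b hab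
  rw [ptree_adj] at hab
  rcases hab.2 with ⟨h1, h2⟩ | ⟨h1, h2⟩
  · exact h2 ▸ hsub a h1
  · exact (h2 ▸ hsub b h1).symm

lemma ptree_disjoint (p₁ p₂ : V → V) (r₁ r₂ : V)
    (hA : ∀ v, v ≠ r₁ → v ≠ r₂ → p₁ v ≠ p₂ v)
    (hB12 : ∀ v, v ≠ r₂ → p₁ (p₂ v) ≠ v)
    (hB21 : ∀ v, v ≠ r₁ → p₂ (p₁ v) ≠ v) :
    Disjoint (ptree p₁ r₁).edgeSet (ptree p₂ r₂).edgeSet := by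
  rw [Set.disjoint_left]
  intro e he1 he2
  induction e with
  | h x y =>
    rw [mem_edgeSet, ptree_adj] at he1 he2
    obtain ⟨hxy, h1⟩ := he1
    obtain ⟨_, h2⟩ := he2
    rcases h1 with ⟨ha1, hb1⟩ | ⟨ha1, hb1⟩ <;> rcases h2 with ⟨ha2, hb2⟩ | ⟨ha2, hb2⟩
    · exact hA x ha1 ha2 (hb1.trans hb2.symm)
    · exact hB12 y ha2 (by rw [hb2, hb1])
    · exact hB21 y ha1 (by rw [hb1, hb2])
    · exact hA y ha1 ha2 (hb1.trans hb2.symm)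

end PTree

section Concrete

variable {n : ℕ} [NeZero n]

def pA (v : Fin 5 × Fin n) : Fin 5 × Fin n :=
  if v.1.val = 0 then (v.1, v.2 - 1)
  else if v.1.val = 1 then (if v.2.val % 3 = 2 then (v.1, v.2 + 1) else ((⟨0, by norm_num⟩ : Fin 5), v.2))
  else if v.1.val = 2 then (if v.2.val % 3 = 2 then (v.1, v.2 - 1) else ((⟨0, by norm_num⟩ : Fin 5), v.2))
  else if v.1.val = 3 then (if v.2.val % 3 = 0 then ((⟨1, by norm_num⟩ : Fin 5), v.2) else if v.2.val % 3 = 1 then ((⟨2, by norm_num⟩ : Fin 5), v.2) else ((⟨0, by norm_num⟩ : Fin 5), v.2))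
  else (if v.2.val % 3 = 0 then ((⟨1, by norm_num⟩ : Fin 5), v.2) else if v.2.val % 3 = 1 then ((⟨2, by norm_num⟩ : Fin 5), v.2) else ((⟨0, by norm_num⟩ : Fin 5), v.2))  -- row v.1.val = 4

def pB (v : Fin 5 × Fin n) : Fin 5 × Fin n :=
  if v.1.val = 3 then (v.1, v.2 - 1)
  else if v.1.val = 0 then (if v.2.val % 3 = 2 then ((⟨2, by norm_num⟩ : Fin 5), v.2) else ((⟨3, by norm_num⟩ : Fin 5), v.2))
  else if v.1.val = 1 then (if v.2.val % 3 = 0 then (v.1, v.2 + 1) else ((⟨3, by norm_num⟩ : Fin 5), v.2))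
  else if v.1.val = 2 then (if v.2.val % 3 = 0 then (v.1, v.2 - 1) else if v.2.val % 3 = 1 then ((⟨1, by norm_num⟩ : Fin 5), v.2) else ((⟨3, by norm_num⟩ : Fin 5), v.2))
  else (if v.2.val % 3 = 0 then ((⟨3, by norm_num⟩ : Fin 5), v.2) else if v.2.val % 3 = 1 then ((⟨1, by norm_num⟩ : Fin 5), v.2) else ((⟨2, by norm_num⟩ : Fin 5), v.2))  -- row v.1.val = 4

def pC (v : Fin 5 × Fin n) : Fin 5 × Fin n :=
  if v.1.val = 4 then (v.1, v.2 - 1)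
  else if v.1.val = 0 then (if v.2.val % 3 = 2 then ((⟨1, by norm_num⟩ : Fin 5), v.2) else ((⟨4, by norm_num⟩ : Fin 5), v.2))
  else if v.1.val = 1 then (if v.2.val % 3 = 0 then ((⟨2, by norm_num⟩ : Fin 5), v.2) else if v.2.val % 3 = 1 then (v.1, v.2 + 1) else ((⟨4, by norm_num⟩ : Fin 5), v.2))
  else if v.1.val = 2 then (if v.2.val % 3 = 0 then ((⟨4, by norm_num⟩ : Fin 5), v.2) else if v.2.val % 3 = 1 then (v.1, v.2 - 1) else ((⟨1, by norm_num⟩ : Fin 5), v.2))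
  else (if v.2.val % 3 = 0 then ((⟨2, by norm_num⟩ : Fin 5), v.2) else ((⟨4, by norm_num⟩ : Fin 5), v.2))  -- row v.1.val = 3


def rA (v : Fin 5 × Fin n) : ℕ :=
  if v.1.val = 0 then 3*v.2.val
  else if v.1.val = 1 then (if v.2.val % 3 = 2 then 3*v.2.val+5 else 3*v.2.val+1)
  else if v.1.val = 2 then (if v.2.val % 3 = 2 then 3*v.2.val-1 else 3*v.2.val+1)
  else if v.2.val % 3 = 2 then 3*v.2.val+1 else 3*v.2.val+2

def rB (n : ℕ) [NeZero n] (v : Fin 5 × Fin n) : ℕ :=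
  if v.1.val = 3 then 3*v.2.val
  else if v.1.val = 0 then (if v.2.val % 3 = 2 then 3*v.2.val+2 else 3*v.2.val+1)
  else if v.1.val = 1 then (if v.2.val % 3 = 0 then 3*v.2.val+5 else 3*v.2.val+1)
  else if v.1.val = 2 then
    (if v.2.val % 3 = 0 then (if v.2.val = 0 then 3*n else 3*v.2.val-1)
     else if v.2.val % 3 = 1 then 3*v.2.val+2 else 3*v.2.val+1)
  else if v.2.val % 3 = 0 then 3*v.2.val+1 else 3*v.2.val+2

def rC (v : Fin 5 × Fin n) : ℕ :=
  if v.1.val = 4 then 3*v.2.val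
  else if v.1.val = 0 then (if v.2.val % 3 = 2 then 3*v.2.val+2 else 3*v.2.val+1)
  else if v.1.val = 1 then
    (if v.2.val % 3 = 0 then 3*v.2.val+2
     else if v.2.val % 3 = 1 then 3*v.2.val+5 else 3*v.2.val+1)
  else if v.1.val = 2 then
    (if v.2.val % 3 = 0 then 3*v.2.val+1
     else if v.2.val % 3 = 1 then 3*v.2.val-1 else 3*v.2.val+2)
  else if v.2.val % 3 = 0 then 3*v.2.val+2 else 3*v.2.val+1

def IA (v : Fin 5 × Fin n) : Prop :=
  v.1.val = 0 ∨ (v.1.val = 1 ∧ v.2.val % 3 = 0) ∨ (v.1.val = 2 ∧ v.2.val % 3 = 1)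
def IB (v : Fin 5 × Fin n) : Prop :=
  v.1.val = 3 ∨ (v.1.val = 1 ∧ v.2.val % 3 = 1) ∨ (v.1.val = 2 ∧ v.2.val % 3 = 2)
def IC (v : Fin 5 × Fin n) : Prop :=
  v.1.val = 4 ∨ (v.1.val = 2 ∧ v.2.val % 3 = 0) ∨ (v.1.val = 1 ∧ v.2.val % 3 = 2)

def rootA : Fin 5 × Fin n := ((⟨0, by norm_num⟩ : Fin 5), ⟨0, Nat.pos_of_ne_zero (NeZero.ne n)⟩)
def rootB : Fin 5 × Fin n := ((⟨3, by norm_num⟩ : Fin 5), ⟨0, Nat.pos_of_ne_zero (NeZero.ne n)⟩)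
def rootC : Fin 5 × Fin n := ((⟨4, by norm_num⟩ : Fin 5), ⟨0, Nat.pos_of_ne_zero (NeZero.ne n)⟩)

lemma fin_base (hn : 3 ≤ n) (j : Fin n) :
    ((j+1).val = j.val + 1 ∨ (j.val = n-1 ∧ (j+1).val = 0)) ∧
    ((j-1).val = j.val - 1 ∧ 1 ≤ j.val ∨ (j.val = 0 ∧ (j-1).val = n-1)) ∧
    j.val < n := by
  have h1 : (1 : Fin n).val = 1 := by
    rw [Fin.val_one']
    exact Nat.mod_eq_of_lt (by omega)
  have ha : (j + 1).val = (j.val + 1) % n := by rw [Fin.add_def, h1]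
  have hs : (j - 1).val = (n - 1 + j.val) % n := by rw [Fin.sub_def, h1]
  have hj := j.isLt
  refine ⟨?_, ?_, hj⟩
  · rcases Nat.lt_or_ge j.val (n-1) with h | h
    · left; rw [ha, Nat.mod_eq_of_lt (by omega)]
    · right
      have hjn : j.val = n - 1 := by omega
      refine ⟨hjn, ?_⟩
      rw [ha, hjn, Nat.sub_add_cancel (by omega), Nat.mod_self]
  · rcases Nat.eq_zero_or_pos j.val with h | h
    · right
      refine ⟨h, ?_⟩
      rw [hs, h, Nat.add_zero, Nat.mod_eq_of_lt (by omega)]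
    · left
      refine ⟨?_, h⟩
      rw [hs, show n - 1 + j.val = (j.val - 1) + n by omega, Nat.add_mod_right,
        Nat.mod_eq_of_lt (by omega)]

lemma cyc_sub (hn : 3 ≤ n) (j : Fin n) : (cycleGraph n).Adj j (j - 1) := by
  obtain ⟨m, rfl⟩ : ∃ m, n = m + 3 := ⟨n - 3, by omega⟩
  rw [show (cycleGraph (m + 3)) = (cycleGraph ((m + 1) + 2)) from rfl, cycleGraph_adj]
  left
  exact sub_sub_cancel j 1

lemma cyc_add (hn : 3 ≤ n) (j : Fin n) : (cycleGraph n).Adj j (j + 1) := by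
  obtain ⟨m, rfl⟩ : ∃ m, n = m + 3 := ⟨n - 3, by omega⟩
  rw [show (cycleGraph (m + 3)) = (cycleGraph ((m + 1) + 2)) from rfl, cycleGraph_adj]
  right
  exact add_sub_cancel_left j 1

lemma hrA (hn : 3 ≤ n) (hdvd : 3 ∣ n) :
    ∀ v : Fin 5 × Fin n, v ≠ (rootA : Fin 5 × Fin n) → rA (pA v) < rA v := by
  rintro ⟨r, j⟩ hv
  have hv' : ¬(r.val = 0 ∧ j.val = 0) := fun h => hv (Prod.ext (Fin.ext h.1) (Fin.ext h.2))
  obtain ⟨ha, hs, hj⟩ := fin_base hn j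
  have hm1 : (j+1).val % 3 = (j.val % 3 + 1) % 3 := by omega
  have hm2 : (j-1).val % 3 = (j.val % 3 + 2) % 3 := by omega
  have h5 : r.val = 0 ∨ r.val = 1 ∨ r.val = 2 ∨ r.val = 3 ∨ r.val = 4 := by omega
  have h3 : j.val % 3 = 0 ∨ j.val % 3 = 1 ∨ j.val % 3 = 2 := by omega
  rcases h5 with hr|hr|hr|hr|hr <;> rcases h3 with hc|hc|hc <;>
    norm_num [pA, rA, hr, hc, hm1, hm2] <;> omega

lemma hrB (hn : 3 ≤ n) (hdvd : 3 ∣ n) :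
    ∀ v : Fin 5 × Fin n, v ≠ (rootB : Fin 5 × Fin n) → rB n (pB v) < rB n v := by
  rintro ⟨r, j⟩ hv
  have hv' : ¬(r.val = 3 ∧ j.val = 0) := fun h => hv (Prod.ext (Fin.ext h.1) (Fin.ext h.2))
  obtain ⟨ha, hs, hj⟩ := fin_base hn j
  have hm1 : (j+1).val % 3 = (j.val % 3 + 1) % 3 := by omega
  have hm2 : (j-1).val % 3 = (j.val % 3 + 2) % 3 := by omega
  have h5 : r.val = 0 ∨ r.val = 1 ∨ r.val = 2 ∨ r.val = 3 ∨ r.val = 4 := by omega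
  have h3 : j.val % 3 = 0 ∨ j.val % 3 = 1 ∨ j.val % 3 = 2 := by omega
  rcases h5 with hr|hr|hr|hr|hr <;> rcases h3 with hc|hc|hc <;> rcases eq_or_ne j.val 0 with hz|hz <;>
    norm_num [pB, rB, hr, hc, hm1, hm2, hz] <;> omega

lemma hrC (hn : 3 ≤ n) (hdvd : 3 ∣ n) :
    ∀ v : Fin 5 × Fin n, v ≠ (rootC : Fin 5 × Fin n) → rC (pC v) < rC v := by
  rintro ⟨r, j⟩ hv
  have hv' : ¬(r.val = 4 ∧ j.val = 0) := fun h => hv (Prod.ext (Fin.ext h.1) (Fin.ext h.2))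
  obtain ⟨ha, hs, hj⟩ := fin_base hn j
  have hm1 : (j+1).val % 3 = (j.val % 3 + 1) % 3 := by omega
  have hm2 : (j-1).val % 3 = (j.val % 3 + 2) % 3 := by omega
  have h5 : r.val = 0 ∨ r.val = 1 ∨ r.val = 2 ∨ r.val = 3 ∨ r.val = 4 := by omega
  have h3 : j.val % 3 = 0 ∨ j.val % 3 = 1 ∨ j.val % 3 = 2 := by omega
  rcases h5 with hr|hr|hr|hr|hr <;> rcases h3 with hc|hc|hc <;>
    norm_num [pC, rC, hr, hc, hm1, hm2] <;> omega

lemma hadjA (hn : 3 ≤ n) (hdvd : 3 ∣ n) :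
    ∀ v : Fin 5 × Fin n, v ≠ (rootA : Fin 5 × Fin n) →
      ((⊤ : SimpleGraph (Fin 5)) □ cycleGraph n).Adj v (pA v) := by
  rintro ⟨r, j⟩ hv
  have hv' : ¬(r.val = 0 ∧ j.val = 0) := fun h => hv (Prod.ext (Fin.ext h.1) (Fin.ext h.2))
  obtain ⟨ha, hs, hj⟩ := fin_base hn j
  have hm1 : (j+1).val % 3 = (j.val % 3 + 1) % 3 := by omega
  have hm2 : (j-1).val % 3 = (j.val % 3 + 2) % 3 := by omega
  have h5 : r.val = 0 ∨ r.val = 1 ∨ r.val = 2 ∨ r.val = 3 ∨ r.val = 4 := by omega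
  have h3 : j.val % 3 = 0 ∨ j.val % 3 = 1 ∨ j.val % 3 = 2 := by omega
  have hc1 := cyc_sub hn j
  have hc2 := cyc_add hn j
  rcases h5 with hr|hr|hr|hr|hr <;> rcases h3 with hc|hc|hc <;>
    norm_num [pA, hr, hc, hm1, hm2, boxProd_adj, top_adj, hc1, hc2, Fin.ext_iff]

lemma hadjB (hn : 3 ≤ n) (hdvd : 3 ∣ n) :
    ∀ v : Fin 5 × Fin n, v ≠ (rootB : Fin 5 × Fin n) →
      ((⊤ : SimpleGraph (Fin 5)) □ cycleGraph n).Adj v (pB v) := by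
  rintro ⟨r, j⟩ hv
  have hv' : ¬(r.val = 3 ∧ j.val = 0) := fun h => hv (Prod.ext (Fin.ext h.1) (Fin.ext h.2))
  obtain ⟨ha, hs, hj⟩ := fin_base hn j
  have hm1 : (j+1).val % 3 = (j.val % 3 + 1) % 3 := by omega
  have hm2 : (j-1).val % 3 = (j.val % 3 + 2) % 3 := by omega
  have h5 : r.val = 0 ∨ r.val = 1 ∨ r.val = 2 ∨ r.val = 3 ∨ r.val = 4 := by omega
  have h3 : j.val % 3 = 0 ∨ j.val % 3 = 1 ∨ j.val % 3 = 2 := by omega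
  have hc1 := cyc_sub hn j
  have hc2 := cyc_add hn j
  rcases h5 with hr|hr|hr|hr|hr <;> rcases h3 with hc|hc|hc <;>
    norm_num [pB, hr, hc, hm1, hm2, boxProd_adj, top_adj, hc1, hc2, Fin.ext_iff]

lemma hadjC (hn : 3 ≤ n) (hdvd : 3 ∣ n) :
    ∀ v : Fin 5 × Fin n, v ≠ (rootC : Fin 5 × Fin n) →
      ((⊤ : SimpleGraph (Fin 5)) □ cycleGraph n).Adj v (pC v) := by
  rintro ⟨r, j⟩ hv
  have hv' : ¬(r.val = 4 ∧ j.val = 0) := fun h => hv (Prod.ext (Fin.ext h.1) (Fin.ext h.2))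
  obtain ⟨ha, hs, hj⟩ := fin_base hn j
  have hm1 : (j+1).val % 3 = (j.val % 3 + 1) % 3 := by omega
  have hm2 : (j-1).val % 3 = (j.val % 3 + 2) % 3 := by omega
  have h5 : r.val = 0 ∨ r.val = 1 ∨ r.val = 2 ∨ r.val = 3 ∨ r.val = 4 := by omega
  have h3 : j.val % 3 = 0 ∨ j.val % 3 = 1 ∨ j.val % 3 = 2 := by omega
  have hc1 := cyc_sub hn j
  have hc2 := cyc_add hn j
  rcases h5 with hr|hr|hr|hr|hr <;> rcases h3 with hc|hc|hc <;>
    norm_num [pC, hr, hc, hm1, hm2, boxProd_adj, top_adj, hc1, hc2, Fin.ext_iff]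

lemma hmemA (hn : 3 ≤ n) (hdvd : 3 ∣ n) :
    ∀ v : Fin 5 × Fin n, v ≠ (rootA : Fin 5 × Fin n) → IA (pA v) := by
  rintro ⟨r, j⟩ hv
  have hv' : ¬(r.val = 0 ∧ j.val = 0) := fun h => hv (Prod.ext (Fin.ext h.1) (Fin.ext h.2))
  obtain ⟨ha, hs, hj⟩ := fin_base hn j
  have hm1 : (j+1).val % 3 = (j.val % 3 + 1) % 3 := by omega
  have hm2 : (j-1).val % 3 = (j.val % 3 + 2) % 3 := by omega
  have h5 : r.val = 0 ∨ r.val = 1 ∨ r.val = 2 ∨ r.val = 3 ∨ r.val = 4 := by omega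
  have h3 : j.val % 3 = 0 ∨ j.val % 3 = 1 ∨ j.val % 3 = 2 := by omega
  rcases h5 with hr|hr|hr|hr|hr <;> rcases h3 with hc|hc|hc <;>
    norm_num [pA, IA, hr, hc, hm1, hm2] <;> omega

lemma hmemB (hn : 3 ≤ n) (hdvd : 3 ∣ n) :
    ∀ v : Fin 5 × Fin n, v ≠ (rootB : Fin 5 × Fin n) → IB (pB v) := by
  rintro ⟨r, j⟩ hv
  have hv' : ¬(r.val = 3 ∧ j.val = 0) := fun h => hv (Prod.ext (Fin.ext h.1) (Fin.ext h.2))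
  obtain ⟨ha, hs, hj⟩ := fin_base hn j
  have hm1 : (j+1).val % 3 = (j.val % 3 + 1) % 3 := by omega
  have hm2 : (j-1).val % 3 = (j.val % 3 + 2) % 3 := by omega
  have h5 : r.val = 0 ∨ r.val = 1 ∨ r.val = 2 ∨ r.val = 3 ∨ r.val = 4 := by omega
  have h3 : j.val % 3 = 0 ∨ j.val % 3 = 1 ∨ j.val % 3 = 2 := by omega
  rcases h5 with hr|hr|hr|hr|hr <;> rcases h3 with hc|hc|hc <;>
    norm_num [pB, IB, hr, hc, hm1, hm2] <;> omega

lemma hmemC (hn : 3 ≤ n) (hdvd : 3 ∣ n) :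
    ∀ v : Fin 5 × Fin n, v ≠ (rootC : Fin 5 × Fin n) → IC (pC v) := by
  rintro ⟨r, j⟩ hv
  have hv' : ¬(r.val = 4 ∧ j.val = 0) := fun h => hv (Prod.ext (Fin.ext h.1) (Fin.ext h.2))
  obtain ⟨ha, hs, hj⟩ := fin_base hn j
  have hm1 : (j+1).val % 3 = (j.val % 3 + 1) % 3 := by omega
  have hm2 : (j-1).val % 3 = (j.val % 3 + 2) % 3 := by omega
  have h5 : r.val = 0 ∨ r.val = 1 ∨ r.val = 2 ∨ r.val = 3 ∨ r.val = 4 := by omega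
  have h3 : j.val % 3 = 0 ∨ j.val % 3 = 1 ∨ j.val % 3 = 2 := by omega
  rcases h5 with hr|hr|hr|hr|hr <;> rcases h3 with hc|hc|hc <;>
    norm_num [pC, IC, hr, hc, hm1, hm2] <;> omega

lemma IdisjAB (v : Fin 5 × Fin n) (h1 : IA v) (h2 : IB v) : False := by
  simp only [IA, IB] at h1 h2
  omega

lemma IdisjAC (v : Fin 5 × Fin n) (h1 : IA v) (h2 : IC v) : False := by
  simp only [IA, IC] at h1 h2
  omega

lemma IdisjBC (v : Fin 5 × Fin n) (h1 : IB v) (h2 : IC v) : False := by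
  simp only [IB, IC] at h1 h2
  omega

lemma rootA_mem : IA (rootA : Fin 5 × Fin n) := Or.inl rfl
lemma rootB_mem : IB (rootB : Fin 5 × Fin n) := Or.inl rfl
lemma rootC_mem : IC (rootC : Fin 5 × Fin n) := Or.inl rfl

lemma hB_AB (hn : 3 ≤ n) (hdvd : 3 ∣ n) :
    ∀ v : Fin 5 × Fin n, v ≠ (rootB : Fin 5 × Fin n) → pA (pB v) ≠ v := by
  rintro ⟨r, j⟩ hv
  have hv' : ¬(r.val = 3 ∧ j.val = 0) := fun h => hv (Prod.ext (Fin.ext h.1) (Fin.ext h.2))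
  obtain ⟨ha, hs, hj⟩ := fin_base hn j
  have hm1 : (j+1).val % 3 = (j.val % 3 + 1) % 3 := by omega
  have hm2 : (j-1).val % 3 = (j.val % 3 + 2) % 3 := by omega
  have h5 : r.val = 0 ∨ r.val = 1 ∨ r.val = 2 ∨ r.val = 3 ∨ r.val = 4 := by omega
  have h3 : j.val % 3 = 0 ∨ j.val % 3 = 1 ∨ j.val % 3 = 2 := by omega
  obtain ⟨ha1, hs1, hj1⟩ := fin_base hn (j+1)
  obtain ⟨ha2, hs2, hj2⟩ := fin_base hn (j-1)
  have hm3 : ((j+1)+1).val % 3 = ((j+1).val % 3 + 1) % 3 := by omega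
  have hm4 : ((j-1)-1).val % 3 = ((j-1).val % 3 + 2) % 3 := by omega
  rcases h5 with hr|hr|hr|hr|hr <;> rcases h3 with hc|hc|hc <;>
    norm_num [pA, pB, hr, hc, hm1, hm2, hm3, hm4, sub_add_cancel,
      add_sub_cancel_right, Prod.ext_iff, Fin.ext_iff] <;> omega

lemma hB_BA (hn : 3 ≤ n) (hdvd : 3 ∣ n) :
    ∀ v : Fin 5 × Fin n, v ≠ (rootA : Fin 5 × Fin n) → pB (pA v) ≠ v := by
  rintro ⟨r, j⟩ hv
  have hv' : ¬(r.val = 0 ∧ j.val = 0) := fun h => hv (Prod.ext (Fin.ext h.1) (Fin.ext h.2))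
  obtain ⟨ha, hs, hj⟩ := fin_base hn j
  have hm1 : (j+1).val % 3 = (j.val % 3 + 1) % 3 := by omega
  have hm2 : (j-1).val % 3 = (j.val % 3 + 2) % 3 := by omega
  have h5 : r.val = 0 ∨ r.val = 1 ∨ r.val = 2 ∨ r.val = 3 ∨ r.val = 4 := by omega
  have h3 : j.val % 3 = 0 ∨ j.val % 3 = 1 ∨ j.val % 3 = 2 := by omega
  obtain ⟨ha1, hs1, hj1⟩ := fin_base hn (j+1)
  obtain ⟨ha2, hs2, hj2⟩ := fin_base hn (j-1)
  have hm3 : ((j+1)+1).val % 3 = ((j+1).val % 3 + 1) % 3 := by omega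
  have hm4 : ((j-1)-1).val % 3 = ((j-1).val % 3 + 2) % 3 := by omega
  rcases h5 with hr|hr|hr|hr|hr <;> rcases h3 with hc|hc|hc <;>
    norm_num [pB, pA, hr, hc, hm1, hm2, hm3, hm4, sub_add_cancel,
      add_sub_cancel_right, Prod.ext_iff, Fin.ext_iff] <;> omega

lemma hB_AC (hn : 3 ≤ n) (hdvd : 3 ∣ n) :
    ∀ v : Fin 5 × Fin n, v ≠ (rootC : Fin 5 × Fin n) → pA (pC v) ≠ v := by
  rintro ⟨r, j⟩ hv
  have hv' : ¬(r.val = 4 ∧ j.val = 0) := fun h => hv (Prod.ext (Fin.ext h.1) (Fin.ext h.2))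
  obtain ⟨ha, hs, hj⟩ := fin_base hn j
  have hm1 : (j+1).val % 3 = (j.val % 3 + 1) % 3 := by omega
  have hm2 : (j-1).val % 3 = (j.val % 3 + 2) % 3 := by omega
  have h5 : r.val = 0 ∨ r.val = 1 ∨ r.val = 2 ∨ r.val = 3 ∨ r.val = 4 := by omega
  have h3 : j.val % 3 = 0 ∨ j.val % 3 = 1 ∨ j.val % 3 = 2 := by omega
  obtain ⟨ha1, hs1, hj1⟩ := fin_base hn (j+1)
  obtain ⟨ha2, hs2, hj2⟩ := fin_base hn (j-1)
  have hm3 : ((j+1)+1).val % 3 = ((j+1).val % 3 + 1) % 3 := by omega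
  have hm4 : ((j-1)-1).val % 3 = ((j-1).val % 3 + 2) % 3 := by omega
  rcases h5 with hr|hr|hr|hr|hr <;> rcases h3 with hc|hc|hc <;>
    norm_num [pA, pC, hr, hc, hm1, hm2, hm3, hm4, sub_add_cancel,
      add_sub_cancel_right, Prod.ext_iff, Fin.ext_iff] <;> omega

lemma hB_CA (hn : 3 ≤ n) (hdvd : 3 ∣ n) :
    ∀ v : Fin 5 × Fin n, v ≠ (rootA : Fin 5 × Fin n) → pC (pA v) ≠ v := by
  rintro ⟨r, j⟩ hv
  have hv' : ¬(r.val = 0 ∧ j.val = 0) := fun h => hv (Prod.ext (Fin.ext h.1) (Fin.ext h.2))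
  obtain ⟨ha, hs, hj⟩ := fin_base hn j
  have hm1 : (j+1).val % 3 = (j.val % 3 + 1) % 3 := by omega
  have hm2 : (j-1).val % 3 = (j.val % 3 + 2) % 3 := by omega
  have h5 : r.val = 0 ∨ r.val = 1 ∨ r.val = 2 ∨ r.val = 3 ∨ r.val = 4 := by omega
  have h3 : j.val % 3 = 0 ∨ j.val % 3 = 1 ∨ j.val % 3 = 2 := by omega
  obtain ⟨ha1, hs1, hj1⟩ := fin_base hn (j+1)
  obtain ⟨ha2, hs2, hj2⟩ := fin_base hn (j-1)
  have hm3 : ((j+1)+1).val % 3 = ((j+1).val % 3 + 1) % 3 := by omega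
  have hm4 : ((j-1)-1).val % 3 = ((j-1).val % 3 + 2) % 3 := by omega
  rcases h5 with hr|hr|hr|hr|hr <;> rcases h3 with hc|hc|hc <;>
    norm_num [pC, pA, hr, hc, hm1, hm2, hm3, hm4, sub_add_cancel,
      add_sub_cancel_right, Prod.ext_iff, Fin.ext_iff] <;> omega

lemma hB_BC (hn : 3 ≤ n) (hdvd : 3 ∣ n) :
    ∀ v : Fin 5 × Fin n, v ≠ (rootC : Fin 5 × Fin n) → pB (pC v) ≠ v := by
  rintro ⟨r, j⟩ hv
  have hv' : ¬(r.val = 4 ∧ j.val = 0) := fun h => hv (Prod.ext (Fin.ext h.1) (Fin.ext h.2))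
  obtain ⟨ha, hs, hj⟩ := fin_base hn j
  have hm1 : (j+1).val % 3 = (j.val % 3 + 1) % 3 := by omega
  have hm2 : (j-1).val % 3 = (j.val % 3 + 2) % 3 := by omega
  have h5 : r.val = 0 ∨ r.val = 1 ∨ r.val = 2 ∨ r.val = 3 ∨ r.val = 4 := by omega
  have h3 : j.val % 3 = 0 ∨ j.val % 3 = 1 ∨ j.val % 3 = 2 := by omega
  obtain ⟨ha1, hs1, hj1⟩ := fin_base hn (j+1)
  obtain ⟨ha2, hs2, hj2⟩ := fin_base hn (j-1)
  have hm3 : ((j+1)+1).val % 3 = ((j+1).val % 3 + 1) % 3 := by omega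
  have hm4 : ((j-1)-1).val % 3 = ((j-1).val % 3 + 2) % 3 := by omega
  rcases h5 with hr|hr|hr|hr|hr <;> rcases h3 with hc|hc|hc <;>
    norm_num [pB, pC, hr, hc, hm1, hm2, hm3, hm4, sub_add_cancel,
      add_sub_cancel_right, Prod.ext_iff, Fin.ext_iff] <;> omega

lemma hB_CB (hn : 3 ≤ n) (hdvd : 3 ∣ n) :
    ∀ v : Fin 5 × Fin n, v ≠ (rootB : Fin 5 × Fin n) → pC (pB v) ≠ v := by
  rintro ⟨r, j⟩ hv
  have hv' : ¬(r.val = 3 ∧ j.val = 0) := fun h => hv (Prod.ext (Fin.ext h.1) (Fin.ext h.2))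
  obtain ⟨ha, hs, hj⟩ := fin_base hn j
  have hm1 : (j+1).val % 3 = (j.val % 3 + 1) % 3 := by omega
  have hm2 : (j-1).val % 3 = (j.val % 3 + 2) % 3 := by omega
  have h5 : r.val = 0 ∨ r.val = 1 ∨ r.val = 2 ∨ r.val = 3 ∨ r.val = 4 := by omega
  have h3 : j.val % 3 = 0 ∨ j.val % 3 = 1 ∨ j.val % 3 = 2 := by omega
  obtain ⟨ha1, hs1, hj1⟩ := fin_base hn (j+1)
  obtain ⟨ha2, hs2, hj2⟩ := fin_base hn (j-1)
  have hm3 : ((j+1)+1).val % 3 = ((j+1).val % 3 + 1) % 3 := by omega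
  have hm4 : ((j-1)-1).val % 3 = ((j-1).val % 3 + 2) % 3 := by omega
  rcases h5 with hr|hr|hr|hr|hr <;> rcases h3 with hc|hc|hc <;>
    norm_num [pC, pB, hr, hc, hm1, hm2, hm3, hm4, sub_add_cancel,
      add_sub_cancel_right, Prod.ext_iff, Fin.ext_iff] <;> omega

end Concrete
/-- For every `n ≥ 3` with `n ≡ 0 (mod 3)`, there exist three completely
independent spanning trees in `K_5 □ C_n`. -/
theorem stmt_14 (n : ℕ) (hn : 3 ≤ n) (hdvd : 3 ∣ n) :
    ∃ T : Fin 3 → SimpleGraph (Fin 5 × Fin n),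
      AreCISTs ((⊤ : SimpleGraph (Fin 5)) □ cycleGraph n) T := by
  haveI : NeZero n := ⟨by omega⟩
  haveI : Nonempty (Fin 5 × Fin n) := ⟨rootA⟩
  set G := (⊤ : SimpleGraph (Fin 5)) □ cycleGraph n with hG
  -- the three trees
  set TA := ptree pA (rootA : Fin 5 × Fin n) with hTA
  set TB := ptree pB (rootB : Fin 5 × Fin n) with hTB
  set TC := ptree pC (rootC : Fin 5 × Fin n) with hTC
  -- A'-type lemmas
  have hAAB : ∀ v : Fin 5 × Fin n, v ≠ rootA → v ≠ rootB → pA v ≠ pB v :=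
    fun v h1 h2 heq => (IdisjAB (pA v) (hmemA hn hdvd v h1) (heq ▸ hmemB hn hdvd v h2)).elim
  have hAAC : ∀ v : Fin 5 × Fin n, v ≠ rootA → v ≠ rootC → pA v ≠ pC v :=
    fun v h1 h2 heq => (IdisjAC (pA v) (hmemA hn hdvd v h1) (heq ▸ hmemC hn hdvd v h2)).elim
  have hABC : ∀ v : Fin 5 × Fin n, v ≠ rootB → v ≠ rootC → pB v ≠ pC v :=
    fun v h1 h2 heq => (IdisjBC (pB v) (hmemB hn hdvd v h1) (heq ▸ hmemC hn hdvd v h2)).elim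
  -- leaf degree lemmas
  have leafA : ∀ v : Fin 5 × Fin n, ¬ IA v → degN TA v = 1 := by
    intro v hvI
    refine ptree_degN_eq_one pA rootA rA (hrA hn hdvd) ?_ ?_
    · intro h; exact hvI (h ▸ rootA_mem)
    · intro u hu hequ; exact hvI (hequ ▸ hmemA hn hdvd u hu)
  have leafB : ∀ v : Fin 5 × Fin n, ¬ IB v → degN TB v = 1 := by
    intro v hvI
    refine ptree_degN_eq_one pB rootB (rB n) (hrB hn hdvd) ?_ ?_
    · intro h; exact hvI (h ▸ rootB_mem)
    · intro u hu hequ; exact hvI (hequ ▸ hmemB hn hdvd u hu)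
  have leafC : ∀ v : Fin 5 × Fin n, ¬ IC v → degN TC v = 1 := by
    intro v hvI
    refine ptree_degN_eq_one pC rootC rC (hrC hn hdvd) ?_ ?_
    · intro h; exact hvI (h ▸ rootC_mem)
    · intro u hu hequ; exact hvI (hequ ▸ hmemC hn hdvd u hu)
  have memA' : ∀ v : Fin 5 × Fin n, 1 < degN TA v → IA v := by
    intro v h
    by_contra hI
    rw [leafA v hI] at h
    omega
  have memB' : ∀ v : Fin 5 × Fin n, 1 < degN TB v → IB v := by
    intro v h
    by_contra hI
    rw [leafB v hI] at h
    omega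
  have memC' : ∀ v : Fin 5 × Fin n, 1 < degN TC v → IC v := by
    intro v h
    by_contra hI
    rw [leafC v hI] at h
    omega
  refine ⟨fun i => match i with
    | ⟨0, _⟩ => TA
    | ⟨1, _⟩ => TB
    | ⟨2, _⟩ => TC, ?_, ?_, ?_⟩
  · intro i
    fin_cases i
    · exact ⟨ptree_le pA rootA G (hadjA hn hdvd), ptree_isTree pA rootA rA (hrA hn hdvd)⟩
    · exact ⟨ptree_le pB rootB G (hadjB hn hdvd), ptree_isTree pB rootB (rB n) (hrB hn hdvd)⟩
    · exact ⟨ptree_le pC rootC G (hadjC hn hdvd), ptree_isTree pC rootC rC (hrC hn hdvd)⟩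
  · intro i j hij
    fin_cases i <;> fin_cases j <;>
      first
      | exact absurd rfl hij
      | exact ptree_disjoint pA pB rootA rootB hAAB (hB_AB hn hdvd) (hB_BA hn hdvd)
      | exact (ptree_disjoint pA pB rootA rootB hAAB (hB_AB hn hdvd) (hB_BA hn hdvd)).symm
      | exact ptree_disjoint pA pC rootA rootC hAAC (hB_AC hn hdvd) (hB_CA hn hdvd)
      | exact (ptree_disjoint pA pC rootA rootC hAAC (hB_AC hn hdvd) (hB_CA hn hdvd)).symm
      | exact ptree_disjoint pB pC rootB rootC hABC (hB_BC hn hdvd) (hB_CB hn hdvd)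
      | exact (ptree_disjoint pB pC rootB rootC hABC (hB_BC hn hdvd) (hB_CB hn hdvd)).symm
  · intro v i j h1 h2
    fin_cases i <;> fin_cases j <;>
      first
      | rfl
      | exact (IdisjAB v (memA' v h1) (memB' v h2)).elim
      | exact (IdisjAB v (memA' v h2) (memB' v h1)).elim
      | exact (IdisjAC v (memA' v h1) (memC' v h2)).elim
      | exact (IdisjAC v (memA' v h2) (memC' v h1)).elim
      | exact (IdisjBC v (memB' v h1) (memC' v h2)).elim
      | exact (IdisjBC v (memB' v h2) (memC' v h1)).elim
end
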